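/- arXiv:1603.09017 — 8 statements merged into one kernel-verified Lean document; each statement's English description precedes it below -/
import Mathlib

section
/- For an irreducible transition matrix P on a finite state space S, the tree weights satisfy the balance equation: for every j in S, the sum over i in S of Σ_i · p_{ij} equals Σ_j, where Σ_j is the sum over all spanning trees t of S rooted at j (edges directed toward j) of the product of p_{ik} over directed edges (i,k) of t. -/
open Finset

/-- A spanning forest of `S` with root set `R`, encoded as a successor function:
roots are fixed points, and every state eventually reaches `R` under iteration. -/
def IsForest {S : Type*} [Fintype S] [DecidableEq S] (R : Finset S) (f : S → S) : Prop :=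
  (∀ i ∈ R, f i = i) ∧ ∀ i : S, ∃ n : ℕ, f^[n] i ∈ R

/-- The `P`-weight of a forest: product of transition probabilities over its directed edges. -/
noncomputable def forestWt {S : Type*} [Fintype S] [DecidableEq S]
    (p : S → S → ℝ) (R : Finset S) (f : S → S) : ℝ :=
  ∏ i ∈ Rᶜ, p i (f i)

open Classical in
/-- `w p R`: the total `P`-weight of spanning forests with root set `R`. -/
noncomputable def w {S : Type*} [Fintype S] [DecidableEq S]
    (p : S → S → ℝ) (R : Finset S) : ℝ :=
  ∑ f : S → S, if IsForest R f then forestWt p R f else 0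

open Classical in
/-- `wroot p A i j`: total weight of forests with root set `A` in which the tree
containing `i` has root `j`. -/
noncomputable def wroot {S : Type*} [Fintype S] [DecidableEq S]
    (p : S → S → ℝ) (A : Finset S) (i j : S) : ℝ :=
  ∑ f : S → S, if IsForest A f ∧ ∃ n : ℕ, f^[n] i = j then forestWt p A f else 0

/-- `p` is a stochastic matrix. -/
def IsStochastic {S : Type*} [Fintype S] (p : S → S → ℝ) : Prop :=
  (∀ i j, 0 ≤ p i j) ∧ ∀ i, ∑ j, p i j = 1

/-- `p` is irreducible. -/
def PIrreducible {S : Type*} [Fintype S] [DecidableEq S] (p : S → S → ℝ) : Prop :=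
  ∀ i j : S, ∃ n : ℕ, 0 < ((Matrix.of p) ^ n) i j

/-- Weight of a path starting at `i` with successive states given by the list. -/
def wt {S : Type*} (p : S → S → ℝ) : S → List S → ℝ
  | _, [] => 1
  | i, j :: l => p i j * wt p j l

section helpers
open Finset
variable {S : Type*} [Fintype S] [DecidableEq S]

lemma reach_of_agree {f g : S → S} {j : S} (h : ∀ x, x ≠ j → f x = g x) :
    ∀ (n : ℕ) (k : S), f^[n] k = j → ∃ m, g^[m] k = j := by
  intro n
  induction n with
  | zero => exact fun k hk => ⟨0, hk⟩
  | succ n ih =>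
    intro k hk
    by_cases hkj : k = j
    · exact ⟨0, hkj⟩
    · rw [Function.iterate_succ_apply] at hk
      obtain ⟨m, hm⟩ := ih (f k) hk
      exact ⟨m + 1, by rw [Function.iterate_succ_apply, ← h k hkj]; exact hm⟩

lemma cycle_pred_unique {g : S → S} {j a b : S} (ha : g a = j) (hb : g b = j)
    {c d : ℕ} (hca : g^[c+1] a = a) (hdb : g^[d+1] b = b) : a = b := by
  have h1 : g^[c] j = a := by
    conv_rhs => rw [← hca, Function.iterate_succ_apply, ha]
  have h2 : g^[d] j = b := by
    conv_rhs => rw [← hdb, Function.iterate_succ_apply, hb]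
  have hA : g^[(c+1)*d + c] j = a := by
    rw [Function.iterate_add_apply, h1, Function.iterate_mul, Function.iterate_fixed hca]
  have hB : g^[(d+1)*c + d] j = b := by
    rw [Function.iterate_add_apply, h2, Function.iterate_mul, Function.iterate_fixed hdb]
  have he : (c+1)*d + c = (d+1)*c + d := by ring
  rw [← hA, ← hB, he]

lemma prod_split (p : S → S → ℝ) (g : S → S) (i : S) :
    ∏ k, p k (g k) = p i (g i) * ∏ k ∈ ({i} : Finset S)ᶜ, p k (g k) := by
  rw [Fintype.prod_eq_mul_prod_compl i]

end helpers

section main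
open Finset Function
variable {S : Type*} [Fintype S] [DecidableEq S]

open Classical in
lemma lhs_eq (p : S → S → ℝ) (j : S) :
    ∑ i : S, w p {i} * p i j =
      ∑ g ∈ Finset.univ.filter (fun g : S → S => ∀ k, ∃ n, g^[n] k = j),
        ∏ k, p k (g k) := by
  classical
  have step1 : ∑ i : S, w p {i} * p i j =
      ∑ x ∈ (Finset.univ : Finset (S × (S → S))).filter
        (fun x => IsForest {x.1} x.2),
        forestWt p {x.1} x.2 * p x.1 j := by
    rw [Finset.sum_filter, Fintype.sum_prod_type]
    refine Finset.sum_congr rfl fun i _ => ?_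
    rw [w, Finset.sum_mul]
    refine Finset.sum_congr rfl fun f _ => ?_
    rw [ite_mul, zero_mul]
  rw [step1, Finset.sum_filter, Finset.sum_filter, ← Finset.sum_filter, ← Finset.sum_filter]
  refine Finset.sum_bij (fun x _ => Function.update x.2 x.1 j) ?_ ?_ ?_ ?_
  · -- membership
    rintro ⟨i, f⟩ ha
    simp only [Finset.mem_filter, Finset.mem_univ, true_and] at ha ⊢
    intro k
    obtain ⟨n, hn⟩ := ha.2 k
    rw [Finset.mem_singleton] at hn
    have hag : ∀ x, x ≠ i → f x = Function.update f i j x := fun x hx =>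
      (Function.update_of_ne hx _ _).symm
    obtain ⟨m, hm⟩ := reach_of_agree hag n k hn
    exact ⟨m + 1, by rw [Function.iterate_succ_apply', hm, Function.update_self]⟩
  · -- injectivity
    rintro ⟨a, f⟩ ha ⟨b, f'⟩ hb hfab
    simp only [Finset.mem_filter, Finset.mem_univ, true_and] at ha hb
    set g := Function.update f a j with hg
    have hg' : Function.update f' b j = g := hfab.symm
    have hfa : f a = a := ha.1 a (Finset.mem_singleton_self a)
    have hfb : f' b = b := hb.1 b (Finset.mem_singleton_self b)
    have hfg : f = Function.update g a a := by
      funext x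
      by_cases hx : x = a
      · subst hx; rw [Function.update_self, hfa]
      · rw [Function.update_of_ne hx, hg, Function.update_of_ne hx]
    have hfg' : f' = Function.update g b b := by
      funext x
      by_cases hx : x = b
      · subst hx; rw [Function.update_self, hfb]
      · rw [Function.update_of_ne hx, ← hg', Function.update_of_ne hx]
    -- a and b are on the cycle of g, both mapping to j
    have hga : g a = j := by rw [hg, Function.update_self]
    have hgb : g b = j := by rw [← hg', Function.update_self]
    have hreach_a : ∀ k : S, ∃ m, g^[m] k = a := by
      intro k
      obtain ⟨n, hn⟩ := ha.2 k
      rw [Finset.mem_singleton] at hn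
      exact reach_of_agree (fun x hx => by
        rw [hfg, Function.update_of_ne hx]) n k hn
    have hreach_b : ∀ k : S, ∃ m, g^[m] k = b := by
      intro k
      obtain ⟨n, hn⟩ := hb.2 k
      rw [Finset.mem_singleton] at hn
      exact reach_of_agree (fun x hx => by
        rw [hfg', Function.update_of_ne hx]) n k hn
    obtain ⟨m, hma⟩ := hreach_a (g a)
    obtain ⟨m', hmb⟩ := hreach_b (g b)
    have hca : g^[m+1] a = a := by rw [Function.iterate_succ_apply]; exact hma
    have hcb : g^[m'+1] b = b := by rw [Function.iterate_succ_apply]; exact hmb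
    have hab : a = b := cycle_pred_unique hga hgb hca hcb
    subst hab
    have : f = f' := by rw [hfg, hfg']
    rw [this]
  · -- surjectivity
    intro g hgmem
    simp only [Finset.mem_filter, Finset.mem_univ, true_and] at hgmem
    obtain ⟨m, hm⟩ := hgmem (g j)
    have hmj : g^[m+1] j = j := by rw [Function.iterate_succ_apply]; exact hm
    have hgi : g (g^[m] j) = j := by
      rw [Function.iterate_succ_apply'] at hmj; exact hmj
    have hag : ∀ x, x ≠ g^[m] j → g x = Function.update g (g^[m] j) (g^[m] j) x :=
      fun x hx => (Function.update_of_ne hx _ _).symm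
    have hforest : IsForest {g^[m] j} (Function.update g (g^[m] j) (g^[m] j)) := by
      constructor
      · intro x hx; rw [Finset.mem_singleton] at hx; subst hx
        exact Function.update_self _ _ _
      · intro k
        obtain ⟨n, hn⟩ := hgmem k
        have hreach : g^[m + n] k = g^[m] j := by
          rw [Function.iterate_add_apply, hn]
        obtain ⟨m', hm'⟩ := reach_of_agree hag (m + n) k hreach
        exact ⟨m', by rw [Finset.mem_singleton]; exact hm'⟩
    refine ⟨(g^[m] j, Function.update g (g^[m] j) (g^[m] j)), ?_, ?_⟩
    · simp only [Finset.mem_filter, Finset.mem_univ, true_and]; exact hforest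
    · show Function.update (Function.update g (g^[m] j) (g^[m] j)) (g^[m] j) j = g
      funext x
      by_cases hx : x = g^[m] j
      · subst hx; rw [Function.update_self, hgi]
      · rw [Function.update_of_ne hx, Function.update_of_ne hx]
  · -- weights
    rintro ⟨i, f⟩ ha
    simp only [Finset.mem_filter, Finset.mem_univ, true_and] at ha
    rw [prod_split p (Function.update f i j) i, Function.update_self]
    rw [forestWt, mul_comm]
    congr 1
    refine Finset.prod_congr rfl fun k hk => ?_
    rw [Finset.mem_compl, Finset.mem_singleton] at hk
    rw [Function.update_of_ne hk]

open Classical in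
lemma rhs_eq (p : S → S → ℝ) (hrow : ∀ i, ∑ m, p i m = 1) (j : S) :
    w p {j} =
      ∑ g ∈ Finset.univ.filter (fun g : S → S => ∀ k, ∃ n, g^[n] k = j),
        ∏ k, p k (g k) := by
  classical
  have step1 : w p {j} =
      ∑ x ∈ (Finset.univ : Finset ((S → S) × S)).filter
        (fun x => IsForest {j} x.1),
        forestWt p {j} x.1 * p j x.2 := by
    rw [Finset.sum_filter, Fintype.sum_prod_type, w]
    refine Finset.sum_congr rfl fun f _ => ?_
    by_cases hP : IsForest {j} f
    · simp only [hP, if_true, ← Finset.mul_sum, hrow j, mul_one]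
    · simp [hP]
  rw [step1, Finset.sum_filter, Finset.sum_filter, ← Finset.sum_filter, ← Finset.sum_filter]
  refine Finset.sum_bij (fun x _ => Function.update x.1 j x.2) ?_ ?_ ?_ ?_
  · rintro ⟨f, m⟩ ha
    simp only [Finset.mem_filter, Finset.mem_univ, true_and] at ha ⊢
    intro k
    obtain ⟨n, hn⟩ := ha.2 k
    rw [Finset.mem_singleton] at hn
    exact reach_of_agree (fun x hx => (Function.update_of_ne hx _ _).symm) n k hn
  · rintro ⟨f, m⟩ ha ⟨f', m'⟩ hb hfab
    simp only [Finset.mem_filter, Finset.mem_univ, true_and] at ha hb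
    have hfj : f j = j := ha.1 j (Finset.mem_singleton_self j)
    have hfj' : f' j = j := hb.1 j (Finset.mem_singleton_self j)
    have hmm : m = m' := by
      have h := congrFun hfab j
      simp only [Function.update_self] at h
      exact h
    have hff : f = f' := by
      funext x
      by_cases hx : x = j
      · subst hx; rw [hfj, hfj']
      · have h := congrFun hfab x
        simp only [Function.update_of_ne hx] at h
        exact h
    rw [hmm, hff]
  · intro g hgmem
    simp only [Finset.mem_filter, Finset.mem_univ, true_and] at hgmem
    have hag : ∀ x, x ≠ j → g x = Function.update g j j x :=
      fun x hx => (Function.update_of_ne hx _ _).symm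
    refine ⟨(Function.update g j j, g j), ?_, ?_⟩
    · simp only [Finset.mem_filter, Finset.mem_univ, true_and]
      constructor
      · intro x hx; rw [Finset.mem_singleton] at hx; subst hx
        exact Function.update_self _ _ _
      · intro k
        obtain ⟨n, hn⟩ := hgmem k
        obtain ⟨m', hm'⟩ := reach_of_agree hag n k hn
        exact ⟨m', by rw [Finset.mem_singleton]; exact hm'⟩
    · show Function.update (Function.update g j j) j (g j) = g
      funext x
      by_cases hx : x = j
      · subst hx; rw [Function.update_self]
      · rw [Function.update_of_ne hx, Function.update_of_ne hx]
  · rintro ⟨f, m⟩ ha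
    simp only [Finset.mem_filter, Finset.mem_univ, true_and] at ha
    rw [prod_split p (Function.update f j m) j, Function.update_self]
    rw [forestWt, mul_comm]
    congr 1
    refine Finset.prod_congr rfl fun k hk => ?_
    rw [Finset.mem_compl, Finset.mem_singleton] at hk
    rw [Function.update_of_ne hk]

end main

/-- Markov chain tree theorem balance equation: `∑ i, Σ_i p_{ij} = Σ_j`. -/
theorem tree_weight_balance {S : Type*} [Fintype S] [DecidableEq S]
    (p : S → S → ℝ) (hs : IsStochastic p) (hirr : PIrreducible p) (j : S) :
    ∑ i : S, w p {i} * p i j = w p {j} :=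
  (lhs_eq p j).trans (rhs_eq p hs.2 j).symm
end

section
/- For an irreducible transition matrix P on a finite state space S with tree weights Σ_j > 0 for all j, the probability vector π defined by π_j = Σ_j / (Σ_{k∈S} Σ_k) is a stationary distribution for P, i.e., π P = π. -/
open Finset

/- ### Auxiliary lemmas for the Markov chain tree theorem -/

/-- If `f` and `g` agree away from `a`, and the `g`-orbit of `s` hits `a`,
then so does the `f`-orbit. -/
private lemma reach_of {S : Type*} {f g : S → S} {a : S}
    (hfg : ∀ x, x ≠ a → f x = g x) :
    ∀ n s, g^[n] s = a → ∃ m, f^[m] s = a := by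
  intro n
  induction n with
  | zero => exact fun s h => ⟨0, h⟩
  | succ n ih =>
    intro s h
    by_cases hs : s = a
    · exact ⟨0, hs⟩
    · rw [Function.iterate_succ_apply] at h
      obtain ⟨m, hm⟩ := ih (g s) h
      refine ⟨m + 1, ?_⟩
      rw [Function.iterate_succ_apply, hfg s hs, hm]

/-- If `f` and `g` agree away from `a` and the `g`-orbit of `s` avoids `a` before
time `n`, then the iterates agree up to time `n`. -/
private lemma iter_agree {S : Type*} {f g : S → S} {a : S}
    (hfg : ∀ x, x ≠ a → f x = g x) {s : S} {n : ℕ}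
    (h : ∀ m, m < n → g^[m] s ≠ a) : ∀ m, m ≤ n → f^[m] s = g^[m] s := by
  intro m
  induction m with
  | zero => intro _; rfl
  | succ k ih =>
    intro hk
    rw [Function.iterate_succ_apply', Function.iterate_succ_apply',
      ih (Nat.le_of_succ_le hk), hfg _ (h k (Nat.lt_of_lt_of_le (Nat.lt_succ_self k) hk))]

open Classical in
/-- The cycle predecessor of `j` under `g` (when the orbit of `j` returns to `j`). -/
private noncomputable def cpred {S : Type*} (g : S → S) (j : S) : S :=
  if h : ∃ n, g^[n + 1] j = j then g^[Nat.find h] j else j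

open Classical in
private lemma cpred_eq {S : Type*} {g : S → S} {j : S} (h : ∃ n, g^[n + 1] j = j) :
    g (cpred g j) = j ∧ ∃ n, g^[n] j = cpred g j := by
  simp only [cpred, dif_pos h]
  refine ⟨?_, _, rfl⟩
  have hs := Nat.find_spec h
  rwa [Function.iterate_succ_apply'] at hs

/-- Uniqueness of the cycle predecessor of `j`. -/
private lemma cycle_pred_unique_s1 {S : Type*} {g : S → S} {j i₁ i₂ : S}
    (h1 : g i₁ = j) (e1 : ∃ n, g^[n] j = i₁)
    (h2 : g i₂ = j) (e2 : ∃ n, g^[n] j = i₂) : i₁ = i₂ := by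
  obtain ⟨n₁, hn₁⟩ := e1
  obtain ⟨n₂, hn₂⟩ := e2
  have c1 : g^[n₁ + 1] j = j := by rw [Function.iterate_succ_apply', hn₁, h1]
  have c2 : g^[n₂ + 1] j = j := by rw [Function.iterate_succ_apply', hn₂, h2]
  calc i₁ = g^[n₁] j := hn₁.symm
    _ = g^[n₁] (g^[n₂ + 1] j) := by rw [c2]
    _ = g^[n₁ + (n₂ + 1)] j := (Function.iterate_add_apply g n₁ (n₂ + 1) j).symm
    _ = g^[n₂ + (n₁ + 1)] j := by rw [show n₁ + (n₂ + 1) = n₂ + (n₁ + 1) by omega]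
    _ = g^[n₂] (g^[n₁ + 1] j) := Function.iterate_add_apply g n₂ (n₁ + 1) j
    _ = g^[n₂] j := by rw [c1]
    _ = i₂ := hn₂

open Classical in
private lemma cpred_update {S : Type*} [DecidableEq S] {f : S → S} {i j : S}
    (hfi : f i = i) (hreach : ∃ n, f^[n] j = i) :
    cpred (Function.update f i j) j = i := by
  set g := Function.update f i j with hgdef
  have hfg : ∀ x, x ≠ i → g x = f x := fun x hx => Function.update_of_ne hx _ _
  have hgi : g i = j := Function.update_self _ _ _
  obtain ⟨n, hn⟩ := hreach
  obtain ⟨m, hm⟩ := reach_of hfg n j hn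
  have h : ∃ k, g^[k + 1] j = j := ⟨m, by rw [Function.iterate_succ_apply', hm, hgi]⟩
  obtain ⟨hc1, hc2⟩ := cpred_eq h
  exact cycle_pred_unique_s1 hc1 hc2 hgi ⟨m, hm⟩

open Classical in
/-- Total weight of "unicyclic" functions whose every orbit reaches `j` equals `w p {j}`. -/
private lemma claimB {S : Type*} [Fintype S] [DecidableEq S]
    (p : S → S → ℝ) (j : S) (hrow : ∑ k, p j k = 1) :
    w p {j} = ∑ g ∈ Finset.univ.filter (fun g : S → S => ∀ s : S, ∃ n, g^[n] s = j),
      ∏ s, p s (g s) := by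
  classical
  calc w p {j}
      = ∑ f ∈ Finset.univ.filter (fun f => IsForest {j} f), forestWt p {j} f := by
        rw [w, ← Finset.sum_filter]
    _ = ∑ f ∈ Finset.univ.filter (fun f => IsForest {j} f), ∑ k : S,
          p j k * forestWt p {j} f := by
        refine Finset.sum_congr rfl fun f _ => ?_
        rw [← Finset.sum_mul, hrow, one_mul]
    _ = ∑ q ∈ (Finset.univ.filter (fun f => IsForest {j} f)) ×ˢ (Finset.univ : Finset S),
          p j q.2 * forestWt p {j} q.1 := by
        rw [Finset.sum_product]
    _ = ∑ g ∈ Finset.univ.filter (fun g : S → S => ∀ s : S, ∃ n, g^[n] s = j),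
          ∏ s, p s (g s) := by
        refine Finset.sum_nbij' (fun q => Function.update q.1 j q.2)
          (fun g => (Function.update g j j, g j)) ?_ ?_ ?_ ?_ ?_
        · rintro ⟨f, k⟩ hq
          simp only [Finset.mem_product, Finset.mem_filter, Finset.mem_univ, true_and] at hq ⊢
          intro s
          obtain ⟨n, hn⟩ := hq.1.2 s
          rw [Finset.mem_singleton] at hn
          have hfg : ∀ x, x ≠ j → Function.update f j k x = f x :=
            fun x hx => Function.update_of_ne hx _ _
          exact reach_of hfg n s hn
        · intro g hg
          simp only [Finset.mem_filter, Finset.mem_univ, true_and] at hg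
          simp only [Finset.mem_product, Finset.mem_filter, Finset.mem_univ, true_and, and_true]
          constructor
          · intro x hx
            rw [Finset.mem_singleton] at hx
            subst hx
            exact Function.update_self _ _ _
          · intro s
            obtain ⟨n, hn⟩ := hg s
            have hfg : ∀ x, x ≠ j → Function.update g j j x = g x :=
              fun x hx => Function.update_of_ne hx _ _
            obtain ⟨m, hm⟩ := reach_of hfg n s hn
            exact ⟨m, Finset.mem_singleton.mpr hm⟩
        · rintro ⟨f, k⟩ hq
          simp only [Finset.mem_product, Finset.mem_filter, Finset.mem_univ, true_and] at hq
          have hfj : f j = j := hq.1.1 j (Finset.mem_singleton_self j)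
          have h1 : Function.update f j j = f := by
            funext x
            rcases eq_or_ne x j with rfl | hx
            · rw [Function.update_self, hfj]
            · rw [Function.update_of_ne hx]
          show (Function.update (Function.update f j k) j j, Function.update f j k j) = (f, k)
          rw [Function.update_idem, Function.update_self, h1]
        · intro g hg
          show Function.update (Function.update g j j) j (g j) = g
          rw [Function.update_idem]
          funext x
          rcases eq_or_ne x j with rfl | hx
          · rw [Function.update_self]
          · rw [Function.update_of_ne hx]
        · rintro ⟨f, k⟩ hq
          show p j k * forestWt p {j} f = ∏ s, p s (Function.update f j k s)
          rw [Fintype.prod_eq_mul_prod_compl j, Function.update_self, forestWt]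
          congr 1
          refine Finset.prod_congr rfl fun x hx => ?_
          rw [Finset.mem_compl, Finset.mem_singleton] at hx
          rw [Function.update_of_ne hx]

open Classical in
/-- Total weight of "unicyclic" functions whose every orbit reaches `j` equals
`∑ i, w p {i} * p i j`. -/
private lemma claimA {S : Type*} [Fintype S] [DecidableEq S]
    (p : S → S → ℝ) (j : S) :
    ∑ i : S, w p {i} * p i j
      = ∑ g ∈ Finset.univ.filter (fun g : S → S => ∀ s : S, ∃ n, g^[n] s = j),
          ∏ s, p s (g s) := by
  classical
  calc ∑ i : S, w p {i} * p i j
      = ∑ i : S, ∑ f : S → S,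
          (if IsForest {i} f then forestWt p {i} f * p i j else 0) := by
        refine Finset.sum_congr rfl fun i _ => ?_
        rw [w, Finset.sum_mul]
        exact Finset.sum_congr rfl fun f _ => by split <;> simp
    _ = ∑ q ∈ (Finset.univ ×ˢ Finset.univ : Finset (S × (S → S))),
          (if IsForest {q.1} q.2 then forestWt p {q.1} q.2 * p q.1 j else 0) := by
        rw [Finset.sum_product]
    _ = ∑ q ∈ (Finset.univ ×ˢ Finset.univ : Finset (S × (S → S))).filter
          (fun q => IsForest {q.1} q.2), forestWt p {q.1} q.2 * p q.1 j := by
        rw [Finset.sum_filter]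
    _ = ∑ g ∈ Finset.univ.filter (fun g : S → S => ∀ s : S, ∃ n, g^[n] s = j),
          ∏ s, p s (g s) := by
        refine Finset.sum_nbij' (fun q => Function.update q.2 q.1 j)
          (fun g => (cpred g j, Function.update g (cpred g j) (cpred g j))) ?_ ?_ ?_ ?_ ?_
        · rintro ⟨i, f⟩ hq
          simp only [Finset.mem_filter, Finset.mem_product, Finset.mem_univ, true_and,
            and_true] at hq ⊢
          intro s
          obtain ⟨n, hn⟩ := hq.2 s
          rw [Finset.mem_singleton] at hn
          have hfg : ∀ x, x ≠ i → Function.update f i j x = f x :=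
            fun x hx => Function.update_of_ne hx _ _
          obtain ⟨m, hm⟩ := reach_of hfg n s hn
          exact ⟨m + 1, by rw [Function.iterate_succ_apply', hm, Function.update_self]⟩
        · intro g hg
          simp only [Finset.mem_filter, Finset.mem_univ, true_and] at hg
          have hh : ∃ n, g^[n + 1] j = j := by
            obtain ⟨m, hm⟩ := hg (g j)
            exact ⟨m, by rw [Function.iterate_succ_apply]; exact hm⟩
          obtain ⟨hgc, n₁, hn₁⟩ := cpred_eq hh
          set c := cpred g j with hcdef
          simp only [Finset.mem_filter, Finset.mem_product, Finset.mem_univ, true_and]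
          constructor
          · intro x hx
            rw [Finset.mem_singleton] at hx
            subst hx
            exact Function.update_self _ _ _
          · intro s
            obtain ⟨n, hn⟩ := hg s
            have hsc : g^[n₁ + n] s = c := by
              rw [Function.iterate_add_apply, hn, hn₁]
            have hfg : ∀ x, x ≠ c → Function.update g c c x = g x :=
              fun x hx => Function.update_of_ne hx _ _
            obtain ⟨m, hm⟩ := reach_of hfg (n₁ + n) s hsc
            exact ⟨m, Finset.mem_singleton.mpr hm⟩
        · rintro ⟨i, f⟩ hq
          simp only [Finset.mem_filter, Finset.mem_product, Finset.mem_univ, true_and,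
            and_true] at hq
          have hfi : f i = i := hq.1 i (Finset.mem_singleton_self i)
          obtain ⟨n, hn⟩ := hq.2 j
          rw [Finset.mem_singleton] at hn
          have hc : cpred (Function.update f i j) j = i := cpred_update hfi ⟨n, hn⟩
          show (cpred (Function.update f i j) j,
            Function.update (Function.update f i j) (cpred (Function.update f i j) j)
              (cpred (Function.update f i j) j)) = (i, f)
          rw [hc, Function.update_idem]
          refine Prod.ext rfl ?_
          show Function.update f i i = f
          funext x
          rcases eq_or_ne x i with rfl | hx
          · rw [Function.update_self, hfi]
          · rw [Function.update_of_ne hx]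
        · intro g hg
          simp only [Finset.mem_filter, Finset.mem_univ, true_and] at hg
          have hh : ∃ n, g^[n + 1] j = j := by
            obtain ⟨m, hm⟩ := hg (g j)
            exact ⟨m, by rw [Function.iterate_succ_apply]; exact hm⟩
          obtain ⟨hgc, -⟩ := cpred_eq hh
          show Function.update (Function.update g (cpred g j) (cpred g j)) (cpred g j) j = g
          set c := cpred g j with hcdef
          rw [Function.update_idem]
          funext x
          rcases eq_or_ne x c with rfl | hx
          · rw [Function.update_self, hgc]
          · rw [Function.update_of_ne hx]
        · rintro ⟨i, f⟩ hq
          simp only [Finset.mem_filter, Finset.mem_product, Finset.mem_univ, true_and,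
            and_true] at hq
          show forestWt p {i} f * p i j = ∏ s, p s (Function.update f i j s)
          rw [Fintype.prod_eq_mul_prod_compl i, Function.update_self, forestWt, mul_comm]
          congr 1
          refine Finset.prod_congr rfl fun x hx => ?_
          rw [Finset.mem_compl, Finset.mem_singleton] at hx
          rw [Function.update_of_ne hx]

/-- Markov chain tree theorem: `π_j = Σ_j / Σ^{(1)}` is a stationary distribution. -/
theorem tree_stationary {S : Type*} [Fintype S] [DecidableEq S]
    (p : S → S → ℝ) (hs : IsStochastic p) (hirr : PIrreducible p)
    (hsig : ∀ j : S, 0 < w p {j})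
    (π : S → ℝ) (hπ : ∀ j : S, π j = w p {j} / ∑ k : S, w p {k}) :
    ∀ j : S, ∑ i : S, π i * p i j = π j := by
  intro j
  have key : ∑ i : S, w p {i} * p i j = w p {j} := by
    rw [claimA p j, claimB p j (hs.2 j)]
  calc ∑ i : S, π i * p i j
      = ∑ i : S, w p {i} * p i j * (∑ k : S, w p {k})⁻¹ := by
        refine Finset.sum_congr rfl fun i _ => ?_
        rw [hπ i, div_eq_mul_inv, mul_right_comm]
    _ = (∑ i : S, w p {i} * p i j) * (∑ k : S, w p {k})⁻¹ := by rw [Finset.sum_mul]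
    _ = w p {j} * (∑ k : S, w p {k})⁻¹ := by rw [key]
    _ = π j := by rw [hπ j, div_eq_mul_inv]
end

section
/- Let P be a substochastic matrix indexed by S \ R (the restriction of a stochastic matrix to the complement of a nonempty set R ⊆ S). The following are equivalent: (1) the forest weight w(R) = Σ_{f: ROOTS(f)=R} Π_{(i,j)∈f} p_{ij} is strictly positive; (2) there exists a spanning forest of S with root set exactly R all of whose edges (i,j) satisfy p_{ij} > 0; (3) for every i ∈ S \ R there is a finite path from i to some r ∈ R with all transition probabilities positive. -/
open Finset

/-- Positivity of the forest weight `w(R)` is equivalent to the existence of a positive-weight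
spanning forest rooted at `R`, and to the existence of positive-probability paths to `R`. -/
theorem forest_weight_pos_iff {S : Type*} [Fintype S] [DecidableEq S]
    (p : S → S → ℝ) (hs : IsStochastic p) (R : Finset S) (hR : R.Nonempty) :
    (0 < w p R ↔ ∃ f : S → S, IsForest R f ∧ ∀ i ∉ R, 0 < p i (f i)) ∧
    ((∃ f : S → S, IsForest R f ∧ ∀ i ∉ R, 0 < p i (f i)) ↔
      ∀ i ∉ R, ∃ l : List S, 0 < wt p i l ∧ ∃ h : l ≠ [], l.getLast h ∈ R) := by
  classical
  obtain ⟨hp0, hp1⟩ := hs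
  have wt_nonneg : ∀ (i : S) (l : List S), 0 ≤ wt p i l := by
    intro i l
    induction l generalizing i with
    | nil => simp [wt]
    | cons j l ih => exact mul_nonneg (hp0 i j) (ih j)
  constructor
  · constructor
    · intro hw
      by_contra hno
      push_neg at hno
      have hz : w p R = 0 := by
        unfold w
        refine Finset.sum_eq_zero ?_
        intro f _
        split_ifs with hf
        · obtain ⟨i, hi, hpi⟩ := hno f hf
          have : p i (f i) = 0 := le_antisymm hpi (hp0 i (f i))
          exact Finset.prod_eq_zero (Finset.mem_compl.mpr hi) this
        · rfl
      rw [hz] at hw; exact lt_irrefl 0 hw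
    · rintro ⟨f, hf, hpos⟩
      have h1 : 0 < forestWt p R f :=
        Finset.prod_pos fun i hi => hpos i (Finset.mem_compl.mp hi)
      have h2 : forestWt p R f ≤ w p R := by
        unfold w
        have key := Finset.single_le_sum
          (f := fun g : S → S => if IsForest R g then forestWt p R g else 0)
          (fun g _ => by
            split_ifs
            · exact Finset.prod_nonneg fun i _ => hp0 _ _
            · exact le_refl 0) (Finset.mem_univ f)
        simpa [hf] using key
      exact lt_of_lt_of_le h1 h2
  · constructor
    · rintro ⟨f, hf, hpos⟩ i hi
      obtain ⟨n, hn⟩ := hf.2 i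
      induction n generalizing i with
      | zero => simp only [Function.iterate_zero, id_eq] at hn; exact absurd hn hi
      | succ n ih =>
        by_cases hfi : f i ∈ R
        · refine ⟨[f i], ?_, by simp, ?_⟩
          · simpa [wt] using hpos i hi
          · simpa using hfi
        · rw [Function.iterate_succ_apply] at hn
          obtain ⟨l, hl, hne, hlast⟩ := ih (f i) hfi hn
          refine ⟨f i :: l, mul_pos (hpos i hi) hl, by simp, ?_⟩
          rwa [List.getLast_cons hne]
    · intro hpath
      have ex : ∀ i, i ∉ R → ∃ n : ℕ, ∃ l : List S,
          0 < wt p i l ∧ (∃ h : l ≠ [], l.getLast h ∈ R) ∧ l.length = n := by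
        intro i hi
        obtain ⟨l, h1, h2⟩ := hpath i hi
        exact ⟨l.length, l, h1, h2, rfl⟩
      haveI : Inhabited S := ⟨hR.choose⟩
      let d : S → ℕ := fun i => if h : i ∈ R then 0 else Nat.find (ex i h)
      have spec : ∀ i (hi : i ∉ R), ∃ l : List S,
          0 < wt p i l ∧ (∃ h : l ≠ [], l.getLast h ∈ R) ∧ l.length = d i := by
        intro i hi
        have := Nat.find_spec (ex i hi)
        simpa [d, dif_neg hi] using this
      let f : S → S := fun i => if h : i ∈ R then i else ((spec i h).choose).headI
      have key : ∀ i (hi : i ∉ R),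
          0 < p i (f i) ∧ (f i ∈ R ∨ (f i ∉ R ∧ d (f i) < d i)) := by
        intro i hi
        have hl := (spec i hi).choose_spec
        have hfi : f i = ((spec i hi).choose).headI := dif_neg hi
        rcases hll : (spec i hi).choose with _ | ⟨j, l'⟩
        · simp only [hll] at hl
          exact absurd rfl hl.2.1.choose
        simp only [hll] at hl hfi
        obtain ⟨hwt, ⟨hne, hlast⟩, hlen⟩ := hl
        simp only [List.headI] at hfi
        have hwt' : 0 < p i j * wt p j l' := hwt
        have hpj : 0 < p i j := by
          rcases mul_pos_iff.mp hwt' with ⟨h1, _⟩ | ⟨h1, _⟩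
          · exact h1
          · exact absurd h1 (not_lt.mpr (hp0 i j))
        have hwl' : 0 < wt p j l' := by
          rcases mul_pos_iff.mp hwt' with ⟨_, h2⟩ | ⟨_, h2⟩
          · exact h2
          · exact absurd h2 (not_lt.mpr (wt_nonneg j l'))
        refine ⟨hfi ▸ hpj, ?_⟩
        by_cases hjR : j ∈ R
        · left; rw [hfi]; exact hjR
        · right
          refine ⟨hfi ▸ hjR, ?_⟩
          have hne' : l' ≠ [] := by
            rintro rfl
            exact hjR (by simpa using hlast)
          have hlast' : l'.getLast hne' ∈ R := by
            rw [List.getLast_cons hne'] at hlast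
            exact hlast
          have hdj : d j ≤ l'.length := by
            have : Nat.find (ex j hjR) ≤ l'.length :=
              Nat.find_le ⟨l', hwl', ⟨hne', hlast'⟩, rfl⟩
            simpa [d, dif_neg hjR] using this
          have hdi : d i = l'.length + 1 := by
            rw [← hlen]; simp
          rw [hfi]
          omega
      have reach : ∀ n : ℕ, ∀ i : S, d i ≤ n → ∃ m : ℕ, f^[m] i ∈ R := by
        intro n
        induction n with
        | zero =>
          intro i hdi
          by_cases hi : i ∈ R
          · exact ⟨0, by simpa using hi⟩
          · obtain ⟨_, hR' | ⟨_, hlt⟩⟩ := key i hi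
            · exact ⟨1, by simpa using hR'⟩
            · omega
        | succ n ih =>
          intro i hdi
          by_cases hi : i ∈ R
          · exact ⟨0, by simpa using hi⟩
          · obtain ⟨_, hR' | ⟨_, hlt⟩⟩ := key i hi
            · exact ⟨1, by simpa using hR'⟩
            · obtain ⟨m, hm⟩ := ih (f i) (by omega)
              exact ⟨m + 1, by rwa [Function.iterate_succ_apply]⟩
      refine ⟨f, ⟨fun i hi => dif_pos hi, fun i => reach (d i) i le_rfl⟩,
        fun i hi => (key i hi).1⟩
end

section
/- Let P be a stochastic matrix on a finite set S and R a nonempty subset with w(R) > 0. For each r ∈ R and each i ∈ S \ R, the quantity h(i) = w_{ir}(R)/w(R) is harmonic: w(R) · Σ_{j≠i} p_{ij} · w_{ir}(R) = w(R) · Σ_{k≠i} p_{ik} w_{kr}(R), equivalently (Σ_{j≠i} p_{ij}) · w_{ir}(R) = Σ_{k≠i} p_{ik} · w_{kr}(R), where w_{ir}(R) is the total weight of forests with root set R in which the tree containing i is rooted at r. -/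
open Finset

set_option linter.unusedSectionVars false
section Aux
variable {S : Type*} [Fintype S] [DecidableEq S] {R : Finset S} {f g : S → S}

lemma iter_fixed_aux (h : ∀ i ∈ R, f i = i) {x : S} (hx : x ∈ R) (n : ℕ) : f^[n] x = x := by
  induction n with
  | zero => rfl
  | succ n ih => rw [Function.iterate_succ_apply', ih, h x hx]

lemma no_cycle_aux (h : IsForest R f) {x : S} (hx : x ∉ R) {n : ℕ} (hcyc : f^[n + 1] x = x) :
    False := by
  obtain ⟨m, hm⟩ := h.2 x
  have hper : ∀ q, f^[q * (n + 1)] x = x := by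
    intro q
    induction q with
    | zero => simp
    | succ q ih => rw [Nat.succ_mul, Function.iterate_add_apply, hcyc, ih]
  have h1 : f^[m * (n + 1)] x = x := hper m
  have hle : m ≤ m * (n + 1) := Nat.le_mul_of_pos_right m (Nat.succ_pos n)
  have h2 : f^[m * (n + 1)] x = f^[m] x := by
    conv_lhs => rw [← Nat.sub_add_cancel hle, Function.iterate_add_apply,
      iter_fixed_aux h.1 hm]
  exact hx (h1 ▸ h2 ▸ hm)

lemma fi_ne_aux (h : IsForest R f) {i : S} (hi : i ∉ R) : f i ≠ i :=
  fun e => no_cycle_aux h hi (n := 0) (by simpa using e)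

lemma path_fi_aux (h : IsForest R f) {i : S} (hi : i ∉ R) : ∀ n, f^[n] (f i) ≠ i :=
  fun n hn => no_cycle_aux h hi ((Function.iterate_succ_apply f n i).trans hn)

lemma agree_iter_aux {i a : S} (hfg : ∀ x, x ≠ i → g x = f x)
    (ha : ∀ n, f^[n] a ≠ i) (n : ℕ) : g^[n] a = f^[n] a := by
  induction n with
  | zero => rfl
  | succ n ih =>
    rw [Function.iterate_succ_apply', Function.iterate_succ_apply', ih, hfg _ (ha n)]

lemma forest_update_aux (h : IsForest R f) {i j : S} (hiR : i ∉ R)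
    (hj : ∀ n, f^[n] j ≠ i) : IsForest R (Function.update f i j) := by
  set g := Function.update f i j with hg
  have hgf : ∀ x, x ≠ i → g x = f x := fun x hx => Function.update_of_ne hx _ _
  have hpathj : ∀ n, g^[n] j = f^[n] j := agree_iter_aux hgf hj
  have hRi : ∃ n, g^[n] i ∈ R := by
    obtain ⟨m, hm⟩ := h.2 j
    refine ⟨m + 1, ?_⟩
    rw [Function.iterate_add_apply]
    have hgi : g i = j := by simp [hg]
    rw [Function.iterate_one, hgi, hpathj m]; exact hm
  constructor
  · intro x hx
    rw [hgf x (fun e => hiR (e ▸ hx)), h.1 x hx]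
  · intro x
    by_cases hx : ∃ n, g^[n] x = i
    · obtain ⟨n, hn⟩ := hx
      obtain ⟨m, hm⟩ := hRi
      exact ⟨m + n, by rw [Function.iterate_add_apply, hn]; exact hm⟩
    · push_neg at hx
      obtain ⟨m, hm⟩ := h.2 x
      have : f^[m] x = g^[m] x := agree_iter_aux (fun y hy => (hgf y hy).symm) hx m
      exact ⟨m, this ▸ hm⟩

lemma update_agree_aux {i a : S} (j : S) (ha : ∀ n, f^[n] a ≠ i) (n : ℕ) :
    (Function.update f i j)^[n] a = f^[n] a :=
  agree_iter_aux (fun _ hx => Function.update_of_ne hx _ _) ha n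

end Aux

/-- The function `i ↦ w_{ir}(R)/w(R)` is harmonic off `R`:
`(∑_{j≠i} p_{ij}) w_{ir}(R) = ∑_{k≠i} p_{ik} w_{kr}(R)`. -/

theorem wroot_harmonic {S : Type*} [Fintype S] [DecidableEq S]
    (p : S → S → ℝ) (hs : IsStochastic p) (R : Finset S) (hR : R.Nonempty)
    (hw : 0 < w p R) (r : S) (hr : r ∈ R) (i : S) (hi : i ∉ R) :
    (∑ j ∈ ({i}ᶜ : Finset S), p i j) * wroot p R i r
      = ∑ k ∈ ({i}ᶜ : Finset S), p i k * wroot p R k r := by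
  classical
  set A := (({i}ᶜ : Finset S) ×ˢ (univ : Finset (S → S))).filter
    (fun x : S × (S → S) => IsForest R x.2 ∧ ∃ n, x.2^[n] i = r) with hA
  set B := (({i}ᶜ : Finset S) ×ˢ (univ : Finset (S → S))).filter
    (fun x : S × (S → S) => IsForest R x.2 ∧ ∃ n, x.2^[n] x.1 = r) with hB
  have memA : ∀ x : S × (S → S), x ∈ A ↔ x.1 ≠ i ∧ IsForest R x.2 ∧ ∃ n, x.2^[n] i = r := by
    intro x; simp [hA, Finset.mem_filter, Finset.mem_product, and_assoc]
  have memB : ∀ x : S × (S → S), x ∈ B ↔ x.1 ≠ i ∧ IsForest R x.2 ∧ ∃ n, x.2^[n] x.1 = r := by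
    intro x; simp [hB, Finset.mem_filter, Finset.mem_product, and_assoc]
  have hL : (∑ j ∈ ({i}ᶜ : Finset S), p i j) * wroot p R i r
      = ∑ x ∈ A, p i x.1 * forestWt p R x.2 := by
    rw [hA, Finset.sum_filter, Finset.sum_product, Finset.sum_mul]
    refine Finset.sum_congr rfl fun j _ => ?_
    rw [wroot, Finset.mul_sum]
    refine Finset.sum_congr rfl fun f _ => ?_
    rw [mul_ite, mul_zero]
  have hRr : ∑ k ∈ ({i}ᶜ : Finset S), p i k * wroot p R k r
      = ∑ x ∈ B, p i x.1 * forestWt p R x.2 := by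
    rw [hB, Finset.sum_filter, Finset.sum_product]
    refine Finset.sum_congr rfl fun k _ => ?_
    rw [wroot, Finset.mul_sum]
    refine Finset.sum_congr rfl fun f _ => ?_
    rw [mul_ite, mul_zero]
  rw [hL, hRr]
  set Φ : S × (S → S) → S × (S → S) := fun x =>
    if ∃ n, x.2^[n] x.1 = i then x else (x.2 i, Function.update x.2 i x.1) with hΦ
  have hΦpos : ∀ x : S × (S → S), (∃ n, x.2^[n] x.1 = i) → Φ x = x := by
    intro x hc; rw [hΦ]; exact if_pos hc
  have hΦneg : ∀ x : S × (S → S), ¬ (∃ n, x.2^[n] x.1 = i) →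
      Φ x = (x.2 i, Function.update x.2 i x.1) := by
    intro x hc; rw [hΦ]; exact if_neg hc
  have invol : ∀ x : S × (S → S), IsForest R x.2 → Φ (Φ x) = x := by
    rintro ⟨k, f⟩ hf
    dsimp only at hf
    by_cases hc : ∃ n, f^[n] k = i
    · have h1 := hΦpos (k, f) hc
      rw [h1, h1]
    · push_neg at hc
      rw [hΦneg (k, f) (by push_neg; exact hc)]
      dsimp only
      have hpfi : ∀ n, f^[n] (f i) ≠ i := path_fi_aux hf hi
      have hag : ∀ n, (Function.update f i k)^[n] (f i) = f^[n] (f i) :=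
        update_agree_aux k hpfi
      have hc2 : ¬ ∃ n, (Function.update f i k)^[n] (f i) = i := by
        push_neg; intro n; rw [hag n]; exact hpfi n
      rw [hΦneg (f i, Function.update f i k) hc2]
      refine Prod.ext ?_ ?_
      · simp [Function.update_self]
      · show Function.update (Function.update f i k) i (f i) = f
        rw [Function.update_idem, Function.update_eq_self]
  have hAB : ∀ x ∈ A, Φ x ∈ B := by
    rintro ⟨j, f⟩ hx
    obtain ⟨hj, hf, b, hb⟩ := (memA _).1 hx
    dsimp only at hj hf hb
    by_cases hc : ∃ n, f^[n] j = i
    · rw [hΦpos (j, f) hc]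
      obtain ⟨a, ha⟩ := hc
      exact (memB _).2 ⟨hj, hf, b + a, by
        show f^[b + a] j = r
        rw [Function.iterate_add_apply, ha, hb]⟩
    · rw [hΦneg (j, f) hc]
      push_neg at hc
      refine (memB _).2 ⟨fi_ne_aux hf hi, forest_update_aux hf hi hc, ?_⟩
      have hpfi : ∀ n, f^[n] (f i) ≠ i := path_fi_aux hf hi
      have hb0 : b ≠ 0 := by
        rintro rfl
        have hir : i = r := hb
        exact hi (hir ▸ hr)
      obtain ⟨b', rfl⟩ : ∃ b', b = b' + 1 := ⟨b - 1, (Nat.succ_pred_eq_of_ne_zero hb0).symm⟩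
      refine ⟨b', ?_⟩
      show (Function.update f i j)^[b'] (f i) = r
      rw [update_agree_aux j hpfi b', ← Function.iterate_succ_apply, hb]
  have hBA : ∀ x ∈ B, Φ x ∈ A := by
    rintro ⟨k, g⟩ hx
    obtain ⟨hk, hg, b, hb⟩ := (memB _).1 hx
    dsimp only at hk hg hb
    by_cases hc : ∃ n, g^[n] k = i
    · rw [hΦpos (k, g) hc]
      obtain ⟨a, ha⟩ := hc
      refine (memA _).2 ⟨hk, hg, ?_⟩
      rcases le_or_gt a b with h | h
      · refine ⟨b - a, ?_⟩
        have : g^[b - a + a] k = r := by rw [Nat.sub_add_cancel h]; exact hb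
        rw [Function.iterate_add_apply, ha] at this
        exact this
      · exfalso
        have : g^[a] k = r := by
          have h1 : g^[a - b + b] k = g^[a] k := by rw [Nat.sub_add_cancel h.le]
          rw [← h1, Function.iterate_add_apply, hb, iter_fixed_aux hg.1 hr]
        exact hi (by rw [← ha, this]; exact hr)
    · rw [hΦneg (k, g) hc]
      push_neg at hc
      refine (memA _).2 ⟨fi_ne_aux hg hi, forest_update_aux hg hi hc, b + 1, ?_⟩
      show (Function.update g i k)^[b + 1] i = r
      rw [Function.iterate_succ_apply, Function.update_self, update_agree_aux k hc b, hb]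
  refine Finset.sum_nbij' Φ Φ hAB hBA
    (fun x hx => invol x ((memA x).1 hx).2.1) (fun x hx => invol x ((memB x).1 hx).2.1) ?_
  rintro ⟨j, f⟩ hx
  by_cases hc : ∃ n, f^[n] j = i
  · rw [hΦpos (j, f) hc]
  · rw [hΦneg (j, f) hc]
    show p i j * forestWt p R f = p i (f i) * forestWt p R (Function.update f i j)
    have hiRc : i ∈ Rᶜ := Finset.mem_compl.2 hi
    rw [forestWt, forestWt, ← Finset.mul_prod_erase _ _ hiRc, ← Finset.mul_prod_erase _ _ hiRc]
    have hprod : ∏ x ∈ Rᶜ.erase i, p x (Function.update f i j x)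
        = ∏ x ∈ Rᶜ.erase i, p x (f x) :=
      Finset.prod_congr rfl fun x hx => by
        rw [Function.update_of_ne (Finset.ne_of_mem_erase hx)]
    rw [hprod, Function.update_self]
    ring
end

section
/- Let P be a stochastic matrix on finite S, R ⊆ S with w(R) > 0, and X a Markov chain with transition matrix P. Then for i ∈ S and j ∈ R, the hitting probability satisfies P_i(X_{T_R} = j) = w_{ij}(R)/w(R), where T_R is the first entry time to R (harmonic tree formula). -/
open Finset

open Classical in
/-- `hitProb p R i j`: probability that the chain started at `i` first enters `R` at `j`,
expressed as a sum of path weights over all paths staying outside `R` until hitting `j`. -/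
noncomputable def hitProb {S : Type*} [Fintype S] [DecidableEq S]
    (p : S → S → ℝ) (R : Finset S) (i j : S) : ℝ :=
  if i ∈ R then (if i = j then 1 else 0)
  else ∑' l : {l : List S // l.getLast? = some j ∧ ∀ x ∈ l.dropLast, x ∉ R}, wt p i l.1

section Forest
variable {S : Type*} [Fintype S] [DecidableEq S] {R : Finset S} {f g : S → S}

lemma IsForest.iter_add (hf : IsForest R f) {x : S} {n : ℕ}
    (h : f^[n] x ∈ R) : ∀ d, f^[n + d] x = f^[n] x := by
  intro d
  induction d with
  | zero => rfl
  | succ d ih =>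
    rw [← Nat.add_assoc, Function.iterate_succ_apply', ih]
    exact hf.1 _ h

lemma IsForest.iter_eq_of_le (hf : IsForest R f) {x : S} {n m : ℕ}
    (h : f^[n] x ∈ R) (hnm : n ≤ m) : f^[m] x = f^[n] x := by
  obtain ⟨d, rfl⟩ := Nat.exists_eq_add_of_le hnm
  exact hf.iter_add h d

lemma IsForest.no_cycle (hf : IsForest R f) {i : S} {n : ℕ} (hi : i ∉ R) (hn : n ≠ 0) :
    f^[n] i ≠ i := by
  intro hcyc
  obtain ⟨M, hM⟩ := hf.2 i
  have hfix : ∀ k, f^[n * k] i = i := by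
    intro k
    rw [Function.iterate_mul]
    exact Function.iterate_fixed hcyc k
  have hle : M ≤ n * M := Nat.le_mul_of_pos_left M (Nat.pos_of_ne_zero hn)
  have := hf.iter_eq_of_le hM hle
  rw [hfix M] at this
  exact hi (this ▸ hM)

lemma iter_congr {i : S} (hfg : ∀ y, y ≠ i → f y = g y) {x : S} :
    ∀ {n : ℕ}, (∀ t, t < n → f^[t] x ≠ i) → g^[n] x = f^[n] x := by
  intro n
  induction n with
  | zero => intro _; rfl
  | succ n ih =>
    intro h
    rw [Function.iterate_succ_apply', Function.iterate_succ_apply',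
      ih (fun t ht => h t (ht.trans (Nat.lt_succ_self n)))]
    exact (hfg _ (h n (Nat.lt_succ_self n))).symm

lemma IsForest.update (hf : IsForest R f) {i k : S} (hi : i ∉ R)
    (hk : ∀ n, f^[n] k ≠ i) : IsForest R (Function.update f i k) := by
  set g := Function.update f i k with hg
  have hfg : ∀ y, y ≠ i → f y = g y := fun y hy => (Function.update_of_ne hy _ _).symm
  have hsub : ∀ x, (∀ t, f^[t] x ≠ i) → ∃ n, g^[n] x ∈ R := by
    intro x hx
    obtain ⟨n, hn⟩ := hf.2 x
    exact ⟨n, (iter_congr hfg (fun t _ => hx t)) ▸ hn⟩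
  constructor
  · intro x hx
    have hxi : x ≠ i := fun h => hi (h ▸ hx)
    rw [hg, Function.update_of_ne hxi _ _]
    exact hf.1 x hx
  · intro x
    by_cases hxi : ∃ t, f^[t] x = i
    · classical
      set n₀ := Nat.find hxi with hn₀def
      have hn₀ : f^[n₀] x = i := Nat.find_spec hxi
      have hmin : ∀ t, t < n₀ → f^[t] x ≠ i := fun t ht => Nat.find_min hxi ht
      have hgi : g^[n₀] x = i := by
        rw [iter_congr hfg hmin]; exact hn₀
      -- i reaches R under g: g i = k, then k's f-path avoids i
      obtain ⟨m, hm⟩ := hsub k hk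
      refine ⟨n₀ + (m + 1), ?_⟩
      rw [Nat.add_comm, Function.iterate_add_apply, hgi,
        Function.iterate_succ_apply, show g i = k from Function.update_self _ _ _]
      exact hm
    · push_neg at hxi
      exact hsub x hxi

variable (p : S → S → ℝ)

lemma wroot_of_mem {i j : S} (hi : i ∈ R) :
    wroot p R i j = if i = j then w p R else 0 := by
  classical
  unfold wroot w
  split_ifs with hij
  · subst hij
    refine Finset.sum_congr rfl fun f _ => ?_
    congr 1
    simp only [eq_iff_iff]
    exact ⟨fun h => h.1, fun h => ⟨h, 0, rfl⟩⟩
  · refine Finset.sum_eq_zero fun f _ => ?_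
    rw [if_neg]
    rintro ⟨hf, n, hn⟩
    rw [Function.iterate_fixed (hf.1 i hi) n] at hn
    exact hij hn

lemma wroot_step (hs : IsStochastic p) {i j : S} (hj : j ∈ R) (hi : i ∉ R) :
    wroot p R i j = ∑ k, p i k * wroot p R k j := by
  classical
  have hij : i ≠ j := fun h => hi (h ▸ hj)
  set W : S × (S → S) → ℝ := fun a => p i a.1 * forestWt p R a.2 with hW
  set A : S × (S → S) → Prop := fun a => IsForest R a.2 ∧ ∃ n, a.2^[n] i = j with hA
  set B : S × (S → S) → Prop := fun a => IsForest R a.2 ∧ ∃ n, a.2^[n] a.1 = j with hB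
  have key : ∑ a ∈ univ.filter B, W a = ∑ a ∈ univ.filter A, W a := by
    set Φ : S × (S → S) → S × (S → S) := fun a =>
      if ∃ n, a.2^[n] a.1 = i then a else (a.2 i, Function.update a.2 i a.1) with hΦ
    have hΦ_pos : ∀ (k : S) (f : S → S), (∃ n, f^[n] k = i) → Φ (k, f) = (k, f) := by
      intro k f h; simp only [hΦ]; rw [if_pos h]
    have hΦ_neg : ∀ (k : S) (f : S → S), ¬(∃ n, f^[n] k = i) →
        Φ (k, f) = (f i, Function.update f i k) := by
      intro k f h; simp only [hΦ]; rw [if_neg h]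
    have succ_avoid : ∀ g : S → S, IsForest R g → ∀ t, ¬ g^[t] (g i) = i := by
      intro g hg t h
      exact hg.no_cycle hi (Nat.succ_ne_zero t) (Function.iterate_succ_apply g t i ▸ h)
    have upd_iter : ∀ (g : S → S) (m x : S) (n : ℕ), (∀ t, t < n → g^[t] x ≠ i) →
        (Function.update g i m)^[n] x = g^[n] x := by
      intro g m x n hx
      exact iter_congr (fun y hy => (Function.update_of_ne hy _ _).symm) hx
    have mapsBA : ∀ a, B a → A (Φ a) := by
      rintro ⟨k, f⟩ ⟨hf, N, hN⟩
      simp only at hf hN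
      by_cases h1 : ∃ n, f^[n] k = i
      · rw [hΦ_pos k f h1]
        obtain ⟨n, hn⟩ := h1
        have hnN : n ≤ N := by
          by_contra hlt
          push_neg at hlt
          have := hf.iter_eq_of_le (x := k) (hN ▸ hj) hlt.le
          rw [hn, hN] at this
          exact hij this
        refine ⟨hf, N - n, ?_⟩
        simp only
        rw [← hn, ← Function.iterate_add_apply, Nat.sub_add_cancel hnN]
        exact hN
      · rw [hΦ_neg k f h1]
        push_neg at h1
        refine ⟨hf.update hi h1, N + 1, ?_⟩
        simp only
        rw [Function.iterate_succ_apply, Function.update_self,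
          upd_iter f k k N (fun t _ => h1 t)]
        exact hN
    have mapsAB : ∀ a, A a → B (Φ a) := by
      rintro ⟨m, g⟩ ⟨hg, N, hN⟩
      simp only at hg hN
      by_cases h1 : ∃ n, g^[n] m = i
      · rw [hΦ_pos m g h1]
        obtain ⟨n, hn⟩ := h1
        refine ⟨hg, n + N, ?_⟩
        simp only
        rw [Nat.add_comm n N, Function.iterate_add_apply, hn]
        exact hN
      · rw [hΦ_neg m g h1]
        push_neg at h1
        refine ⟨hg.update hi h1, ?_⟩
        obtain ⟨N', rfl⟩ : ∃ N', N = N' + 1 := by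
          cases N with
          | zero => exact absurd hN hij
          | succ N' => exact ⟨N', rfl⟩
        refine ⟨N', ?_⟩
        simp only
        rw [upd_iter g m (g i) N' (fun t _ => succ_avoid g hg t)]
        rw [Function.iterate_succ_apply] at hN
        exact hN
    have invB : ∀ a, B a → Φ (Φ a) = a := by
      rintro ⟨k, f⟩ ⟨hf, N, hN⟩
      simp only at hf hN
      by_cases h1 : ∃ n, f^[n] k = i
      · rw [hΦ_pos k f h1, hΦ_pos k f h1]
      · rw [hΦ_neg k f h1]
        have hfi : ¬ ∃ t, (Function.update f i k)^[t] (f i) = i := by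
          rintro ⟨t, h⟩
          rw [upd_iter f k (f i) t (fun s _ => succ_avoid f hf s)] at h
          exact succ_avoid f hf t h
        rw [hΦ_neg (f i) (Function.update f i k) hfi]
        rw [Function.update_self, Function.update_idem, Function.update_eq_self]
    have invA : ∀ a, A a → Φ (Φ a) = a := by
      rintro ⟨m, g⟩ ⟨hg, N, hN⟩
      simp only at hg hN
      by_cases h1 : ∃ n, g^[n] m = i
      · rw [hΦ_pos m g h1, hΦ_pos m g h1]
      · rw [hΦ_neg m g h1]
        have hgi : ¬ ∃ t, (Function.update g i m)^[t] (g i) = i := by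
          rintro ⟨t, h⟩
          rw [upd_iter g m (g i) t (fun s _ => succ_avoid g hg s)] at h
          exact succ_avoid g hg t h
        rw [hΦ_neg (g i) (Function.update g i m) hgi]
        rw [Function.update_self, Function.update_idem, Function.update_eq_self]
    have wtΦ : ∀ a, W (Φ a) = W a := by
      rintro ⟨k, f⟩
      by_cases h1 : ∃ n, f^[n] k = i
      · rw [hΦ_pos k f h1]
      · rw [hΦ_neg k f h1]
        have hiRc : i ∈ Rᶜ := Finset.mem_compl.2 hi
        simp only [hW, forestWt]
        rw [← Finset.mul_prod_erase _ (fun x => p x (Function.update f i k x)) hiRc,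
          ← Finset.mul_prod_erase _ (fun x => p x (f x)) hiRc]
        have : ∏ x ∈ Rᶜ.erase i, p x (Function.update f i k x) =
            ∏ x ∈ Rᶜ.erase i, p x (f x) := by
          refine Finset.prod_congr rfl fun x hx => ?_
          rw [Function.update_of_ne (Finset.ne_of_mem_erase hx) _ _]
        rw [this, Function.update_self]
        ring
    refine Finset.sum_nbij' (i := Φ) (j := Φ) ?_ ?_ ?_ ?_ ?_
    · intro a ha
      simp only [Finset.mem_filter, Finset.mem_univ, true_and] at ha ⊢
      exact mapsBA a ha
    · intro a ha
      simp only [Finset.mem_filter, Finset.mem_univ, true_and] at ha ⊢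
      exact mapsAB a ha
    · intro a ha
      simp only [Finset.mem_filter, Finset.mem_univ, true_and] at ha
      exact invB a ha
    · intro a ha
      simp only [Finset.mem_filter, Finset.mem_univ, true_and] at ha
      exact invA a ha
    · intro a ha
      exact (wtΦ a).symm
  calc wroot p R i j
      = ∑ f : S → S, (∑ k, p i k) * (if IsForest R f ∧ ∃ n, f^[n] i = j
          then forestWt p R f else 0) := by
        rw [wroot]
        refine Finset.sum_congr rfl fun f _ => ?_
        rw [hs.2 i, one_mul]
    _ = ∑ f : S → S, ∑ k, (if A (k, f) then W (k, f) else 0) := by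
        refine Finset.sum_congr rfl fun f _ => ?_
        rw [Finset.sum_mul]
        refine Finset.sum_congr rfl fun k _ => ?_
        simp only [hA, hW, mul_ite, mul_zero]
    _ = ∑ a : S × (S → S), (if A a then W a else 0) := by
        rw [Fintype.sum_prod_type]
        exact (Finset.sum_comm).symm
    _ = ∑ a ∈ univ.filter A, W a := (Finset.sum_filter _ _).symm
    _ = ∑ a ∈ univ.filter B, W a := key.symm
    _ = ∑ a : S × (S → S), (if B a then W a else 0) := Finset.sum_filter _ _
    _ = ∑ k, ∑ f : S → S, (if B (k, f) then W (k, f) else 0) := Fintype.sum_prod_type _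
    _ = ∑ k, p i k * wroot p R k j := by
        refine Finset.sum_congr rfl fun k _ => ?_
        rw [wroot, Finset.mul_sum]
        refine Finset.sum_congr rfl fun f _ => ?_
        simp only [hB, hW, mul_ite, mul_zero]


end Forest

def pathsUpTo {S : Type*} [Fintype S] [DecidableEq S] (R : Finset S) (j : S) :
    ℕ → Finset (List S)
  | 0 => ∅
  | n+1 => insert [j] ((Rᶜ).biUnion fun k => (pathsUpTo R j n).image (k :: ·))

section Paths
variable {S : Type*} [Fintype S] [DecidableEq S] {R : Finset S} {j : S}

lemma mem_pathsUpTo : ∀ {n : ℕ} {l : List S}, l ∈ pathsUpTo R j n ↔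
    (l.getLast? = some j ∧ (∀ x ∈ l.dropLast, x ∉ R) ∧ l.length ≤ n) := by
  intro n
  induction n with
  | zero =>
    intro l
    simp only [pathsUpTo, Finset.notMem_empty, false_iff]
    rintro ⟨h1, -, h3⟩
    rw [Nat.le_zero, List.length_eq_zero_iff] at h3
    subst h3
    simp at h1
  | succ n ih =>
    intro l
    simp only [pathsUpTo, Finset.mem_insert, Finset.mem_biUnion, Finset.mem_image,
      Finset.mem_compl]
    constructor
    · rintro (rfl | ⟨k, hk, l', hl', rfl⟩)
      · refine ⟨rfl, by simp, by simp⟩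
      · obtain ⟨h1, h2, h3⟩ := ih.1 hl'
        obtain ⟨b, t, rfl⟩ : ∃ b t, l' = b :: t := by
          cases l' with
          | nil => simp at h1
          | cons b t => exact ⟨b, t, rfl⟩
        refine ⟨by rw [List.getLast?_cons_cons]; exact h1, ?_, by simpa using h3⟩
        intro x hx
        rw [List.dropLast_cons₂, List.mem_cons] at hx
        rcases hx with rfl | hx
        · exact hk
        · exact h2 x hx
    · rintro ⟨h1, h2, h3⟩
      cases l with
      | nil => simp at h1
      | cons a l' =>
        cases l' with
        | nil =>
          left
          simp only [List.getLast?_singleton, Option.some.injEq] at h1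
          rw [h1]
        | cons b t =>
          right
          refine ⟨a, ?_, b :: t, ih.2 ⟨by rwa [List.getLast?_cons_cons] at h1, ?_, ?_⟩, rfl⟩
          · exact h2 a (by rw [List.dropLast_cons₂, List.mem_cons]; exact Or.inl rfl)
          · intro x hx
            exact h2 x (by rw [List.dropLast_cons₂, List.mem_cons]; exact Or.inr hx)
          · simpa using Nat.le_of_succ_le_succ h3

lemma pathsUpTo_mono {n m : ℕ} (h : n ≤ m) : pathsUpTo R j n ⊆ pathsUpTo R j m := by
  intro l hl
  obtain ⟨h1, h2, h3⟩ := mem_pathsUpTo.1 hl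
  exact mem_pathsUpTo.2 ⟨h1, h2, h3.trans h⟩

variable (p : S → S → ℝ)

lemma wt_nonneg (hp : ∀ i j, 0 ≤ p i j) : ∀ (l : List S) (i : S), 0 ≤ wt p i l := by
  intro l
  induction l with
  | nil => intro i; simp [wt]
  | cons a t ih => intro i; exact mul_nonneg (hp i a) (ih a)

lemma sum_pathsUpTo_succ (n : ℕ) (i : S) :
    ∑ l ∈ pathsUpTo R j (n+1), wt p i l
      = p i j + ∑ k ∈ Rᶜ, p i k * ∑ l ∈ pathsUpTo R j n, wt p k l := by
  have hnot : [j] ∉ (Rᶜ).biUnion fun k => (pathsUpTo R j n).image (k :: ·) := by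
    simp only [Finset.mem_biUnion, Finset.mem_image, Finset.mem_compl, not_exists]
    rintro k ⟨hk, l', hl', heq⟩
    obtain ⟨h1, -, -⟩ := mem_pathsUpTo.1 hl'
    have : l' = [] := by
      have := congrArg List.length heq
      simpa using this
    subst this
    simp at h1
  have hdisj : (↑(Rᶜ) : Set S).PairwiseDisjoint
      (fun k => (pathsUpTo R j n).image (k :: ·)) := by
    intro k _ k' _ hkk'
    rw [Function.onFun, Finset.disjoint_left]
    rintro l hl hl'
    simp only [Finset.mem_image] at hl hl'
    obtain ⟨a, -, rfl⟩ := hl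
    obtain ⟨b, -, heq⟩ := hl'
    exact hkk' (List.head_eq_of_cons_eq heq).symm
  show ∑ l ∈ insert [j] _, wt p i l = _
  rw [Finset.sum_insert hnot, Finset.sum_biUnion hdisj]
  have h1 : wt p i [j] = p i j := by simp [wt]
  rw [h1]
  congr 1
  refine Finset.sum_congr rfl fun k _ => ?_
  rw [Finset.sum_image (by intro x _ y _ h; exact List.tail_eq_of_cons_eq h), Finset.mul_sum]
  refine Finset.sum_congr rfl fun l _ => rfl

lemma sum_pathsUpTo_le_one (hs : IsStochastic p) (hj : j ∈ R) :
    ∀ (n : ℕ) (i : S), ∑ l ∈ pathsUpTo R j n, wt p i l ≤ 1 := by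
  intro n
  induction n with
  | zero => intro i; simp [pathsUpTo]
  | succ n ih =>
    intro i
    rw [sum_pathsUpTo_succ]
    have hb : ∑ k ∈ Rᶜ, p i k * ∑ l ∈ pathsUpTo R j n, wt p k l ≤ ∑ k ∈ Rᶜ, p i k := by
      refine Finset.sum_le_sum fun k _ => ?_
      calc p i k * ∑ l ∈ pathsUpTo R j n, wt p k l ≤ p i k * 1 :=
        mul_le_mul_of_nonneg_left (ih k) (hs.1 i k)
      _ = p i k := mul_one _
    have hpj : p i j ≤ ∑ k ∈ R, p i k :=
      Finset.single_le_sum (fun k _ => hs.1 i k) hj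
    calc p i j + ∑ k ∈ Rᶜ, p i k * ∑ l ∈ pathsUpTo R j n, wt p k l
        ≤ ∑ k ∈ R, p i k + ∑ k ∈ Rᶜ, p i k := add_le_add hpj hb
      _ = ∑ k, p i k := Finset.sum_add_sum_compl R _
      _ = 1 := hs.2 i

lemma summable_wt (hs : IsStochastic p) (hj : j ∈ R) (i : S) :
    Summable (fun l : {l : List S // l.getLast? = some j ∧ ∀ x ∈ l.dropLast, x ∉ R} =>
      wt p i l.1) := by
  classical
  refine summable_of_sum_le (c := 1) (fun l => wt_nonneg p hs.1 l.1 i) fun u => ?_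
  set n := u.sup (fun l => l.1.length) with hn
  calc ∑ l ∈ u, wt p i l.1 = ∑ l ∈ u.image Subtype.val, wt p i l :=
      (Finset.sum_image (fun x _ y _ h => Subtype.ext h)).symm
    _ ≤ ∑ l ∈ pathsUpTo R j n, wt p i l := by
      refine Finset.sum_le_sum_of_subset_of_nonneg ?_ (fun l _ _ => wt_nonneg p hs.1 l i)
      intro l hl
      simp only [Finset.mem_image] at hl
      obtain ⟨x, hx, rfl⟩ := hl
      exact mem_pathsUpTo.2 ⟨x.2.1, x.2.2, Finset.le_sup (f := fun l => l.1.length) hx⟩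
    _ ≤ 1 := sum_pathsUpTo_le_one p hs hj n i

lemma tendsto_gSum (hs : IsStochastic p) (hj : j ∈ R) (i : S) (hi : i ∉ R) :
    Filter.Tendsto (fun n => ∑ l ∈ pathsUpTo R j n, wt p i l) Filter.atTop
      (nhds (hitProb p R i j)) := by
  classical
  set C : List S → Prop := fun l => l.getLast? = some j ∧ ∀ x ∈ l.dropLast, x ∉ R with hC
  have hh : hitProb p R i j = ∑' l : {l : List S // C l}, wt p i l.1 := by
    rw [hitProb, if_neg hi]
  rw [hh]
  have hsum := (summable_wt p hs hj i).hasSum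
  have hmono : Monotone (fun n => (pathsUpTo R j n).subtype C) := by
    intro a b hab
    intro x hx
    rw [Finset.mem_subtype] at hx ⊢
    exact pathsUpTo_mono hab hx
  have hexh : ∀ x : {l : List S // C l}, ∃ n, x ∈ (pathsUpTo R j n).subtype C := by
    intro x
    exact ⟨x.1.length, by rw [Finset.mem_subtype]
                          exact mem_pathsUpTo.2 ⟨x.2.1, x.2.2, le_refl _⟩⟩
  have := hsum.comp (Filter.tendsto_atTop_finset_of_monotone hmono hexh)
  convert this using 2 with n
  rw [Function.comp_apply, Finset.sum_subtype_eq_sum_filter,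
    Finset.filter_true_of_mem (fun l hl => ⟨(mem_pathsUpTo.1 hl).1, (mem_pathsUpTo.1 hl).2.1⟩)]

lemma hitProb_rec (hs : IsStochastic p) (hj : j ∈ R) {i : S} (hi : i ∉ R) :
    hitProb p R i j = ∑ k, p i k * hitProb p R k j := by
  classical
  have t1 : Filter.Tendsto (fun n => ∑ l ∈ pathsUpTo R j (n+1), wt p i l) Filter.atTop
      (nhds (hitProb p R i j)) :=
    (tendsto_gSum p hs hj i hi).comp (Filter.tendsto_add_atTop_nat 1)
  have t2 : Filter.Tendsto (fun n => p i j + ∑ k ∈ Rᶜ, p i k *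
      ∑ l ∈ pathsUpTo R j n, wt p k l) Filter.atTop
      (nhds (p i j + ∑ k ∈ Rᶜ, p i k * hitProb p R k j)) := by
    refine Filter.Tendsto.const_add _ ?_
    refine tendsto_finset_sum _ fun k hk => ?_
    exact (tendsto_gSum p hs hj k (Finset.mem_compl.1 hk)).const_mul _
  have heq : (fun n => ∑ l ∈ pathsUpTo R j (n+1), wt p i l)
      = fun n => p i j + ∑ k ∈ Rᶜ, p i k * ∑ l ∈ pathsUpTo R j n, wt p k l := by
    funext n
    exact sum_pathsUpTo_succ p n i
  rw [heq] at t1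
  have hmain : hitProb p R i j = p i j + ∑ k ∈ Rᶜ, p i k * hitProb p R k j :=
    tendsto_nhds_unique t1 t2
  rw [hmain]
  have hsplit : ∑ k, p i k * hitProb p R k j
      = ∑ k ∈ R, p i k * hitProb p R k j + ∑ k ∈ Rᶜ, p i k * hitProb p R k j :=
    (Finset.sum_add_sum_compl R _).symm
  rw [hsplit]
  congr 1
  have : ∀ k ∈ R, p i k * hitProb p R k j = if k = j then p i k else 0 := by
    intro k hk
    rw [hitProb, if_pos hk]
    split_ifs with h
    · rw [mul_one]
    · rw [mul_zero]
  rw [Finset.sum_congr rfl this, Finset.sum_ite_eq' R j (fun k => p i k), if_pos hj]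

end Paths

/-- Harmonic tree formula: `P_i(X_{T_R} = j) = w_{ij}(R)/w(R)`. -/
theorem harmonic_tree_formula {S : Type*} [Fintype S] [DecidableEq S]
    (p : S → S → ℝ) (hs : IsStochastic p) (R : Finset S) (hw : 0 < w p R)
    (i : S) (j : S) (hj : j ∈ R) :
    hitProb p R i j = wroot p R i j / w p R := by
  classical
  have base : ∀ x ∈ R, hitProb p R x j = wroot p R x j / w p R := by
    intro x hx
    rw [hitProb, if_pos hx, wroot_of_mem p hx]
    split_ifs with h
    · rw [div_self (ne_of_gt hw)]
    · rw [zero_div]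
  by_cases hiR : i ∈ R
  · exact base i hiR
  have hne : (Rᶜ).Nonempty := ⟨i, Finset.mem_compl.2 hiR⟩
  set D : S → ℝ := fun x => hitProb p R x j - wroot p R x j / w p R with hD
  have hDR : ∀ x ∈ R, D x = 0 := by
    intro x hx
    simp only [hD]
    rw [base x hx, sub_self]
  have hDrec : ∀ x, x ∉ R → D x = ∑ k ∈ Rᶜ, p x k * D k := by
    intro x hx
    have h1 := hitProb_rec p hs hj hx
    have h2 := wroot_step p hs hj hx
    have hall : D x = ∑ k, p x k * D k := by
      simp only [hD]
      rw [h1, h2, Finset.sum_div, ← Finset.sum_sub_distrib]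
      refine Finset.sum_congr rfl fun k _ => ?_
      rw [mul_div_assoc, ← mul_sub]
    rw [hall, ← Finset.sum_add_sum_compl R (fun k => p x k * D k),
      Finset.sum_eq_zero (fun k hk => by rw [hDR k hk, mul_zero]), zero_add]
  have hforest : ∃ f : S → S, IsForest R f ∧ ∀ x ∈ Rᶜ, 0 < p x (f x) := by
    have hex : ∃ f : S → S, (0:ℝ) < if IsForest R f then forestWt p R f else 0 := by
      by_contra hcon
      push_neg at hcon
      have : w p R ≤ 0 := Finset.sum_nonpos fun f _ => hcon f
      linarith
    obtain ⟨f, hf⟩ := hex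
    by_cases hIF : IsForest R f
    · rw [if_pos hIF] at hf
      refine ⟨f, hIF, fun x hx => ?_⟩
      rcases lt_or_eq_of_le (hs.1 x (f x)) with h | h
      · exact h
      · exfalso
        have : forestWt p R f = 0 := Finset.prod_eq_zero hx h.symm
        rw [this] at hf
        exact lt_irrefl 0 hf
    · rw [if_neg hIF] at hf
      exact absurd hf (lt_irrefl 0)
  obtain ⟨f, hf, hfpos⟩ := hforest
  set c : ℝ := (Rᶜ).inf' hne (fun x => p x (f x)) with hc
  have hc0 : 0 < c := by
    rw [hc, Finset.lt_inf'_iff]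
    exact fun x hx => hfpos x hx
  have hc1 : c ≤ 1 := by
    obtain ⟨x, hx⟩ := hne
    calc c ≤ p x (f x) := Finset.inf'_le _ hx
      _ ≤ ∑ k, p x k := Finset.single_le_sum (fun k _ => hs.1 x k) (Finset.mem_univ _)
      _ = 1 := hs.2 x
  obtain ⟨i₀, hi₀mem, hi₀max⟩ := Finset.exists_max_image (Rᶜ) (fun x => |D x|) hne
  set M := |D i₀| with hM
  have hM0 : 0 ≤ M := abs_nonneg _
  have hMb : ∀ x, |D x| ≤ M := by
    intro x
    by_cases hx : x ∈ R
    · rw [hDR x hx, abs_zero]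
      exact hM0
    · exact hi₀max x (Finset.mem_compl.2 hx)
  have claim : ∀ n : ℕ, ∀ x, x ∉ R → f^[n] x ∈ R → |D x| ≤ (1 - c^n) * M := by
    intro n
    induction n with
    | zero => intro x hx hfx; exact absurd hfx hx
    | succ n ih =>
      intro x hx hfx
      rw [Function.iterate_succ_apply] at hfx
      have hrec := hDrec x hx
      have habs : |D x| ≤ ∑ k ∈ Rᶜ, p x k * |D k| := by
        rw [hrec]
        refine (Finset.abs_sum_le_sum_abs _ _).trans ?_
        refine Finset.sum_le_sum fun k _ => ?_
        rw [abs_mul, abs_of_nonneg (hs.1 x k)]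
      have ha := hs.1 x (f x)
      have hcle : c ≤ p x (f x) := Finset.inf'_le _ (Finset.mem_compl.2 hx)
      by_cases hfxR : f x ∈ R
      · have hSig : ∑ k ∈ Rᶜ, p x k ≤ 1 - p x (f x) := by
          have h1 := Finset.single_le_sum (f := fun k => p x k) (fun k _ => hs.1 x k) hfxR
          have h2 := Finset.sum_add_sum_compl R (fun k => p x k)
          rw [hs.2 x] at h2
          linarith
        have hstep : |D x| ≤ (1 - p x (f x)) * M := by
          refine habs.trans ?_
          calc ∑ k ∈ Rᶜ, p x k * |D k| ≤ ∑ k ∈ Rᶜ, p x k * M :=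
              Finset.sum_le_sum fun k _ => mul_le_mul_of_nonneg_left (hMb k) (hs.1 x k)
            _ = (∑ k ∈ Rᶜ, p x k) * M := (Finset.sum_mul _ _ _).symm
            _ ≤ (1 - p x (f x)) * M := mul_le_mul_of_nonneg_right hSig hM0
        refine hstep.trans ?_
        have hcn : c^(n+1) ≤ c := pow_le_of_le_one (le_of_lt hc0) hc1 (Nat.succ_ne_zero n)
        nlinarith [pow_nonneg (le_of_lt hc0) (n+1)]
      · have hIH := ih (f x) hfxR hfx
        have hfxC : f x ∈ Rᶜ := Finset.mem_compl.2 hfxR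
        have hsplit : ∑ k ∈ Rᶜ, p x k * |D k|
            = p x (f x) * |D (f x)| + ∑ k ∈ (Rᶜ).erase (f x), p x k * |D k| :=
          (Finset.add_sum_erase _ _ hfxC).symm
        have herase : ∑ k ∈ (Rᶜ).erase (f x), p x k * |D k| ≤ (1 - p x (f x)) * M := by
          calc ∑ k ∈ (Rᶜ).erase (f x), p x k * |D k|
              ≤ ∑ k ∈ (Rᶜ).erase (f x), p x k * M :=
              Finset.sum_le_sum fun k _ => mul_le_mul_of_nonneg_left (hMb k) (hs.1 x k)
            _ = (∑ k ∈ (Rᶜ).erase (f x), p x k) * M := (Finset.sum_mul _ _ _).symm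
            _ ≤ (1 - p x (f x)) * M := by
              refine mul_le_mul_of_nonneg_right ?_ hM0
              have h1 := Finset.add_sum_erase (Rᶜ) (fun k => p x k) hfxC
              have h2 : ∑ k ∈ Rᶜ, p x k ≤ 1 := by
                have h3 := Finset.sum_add_sum_compl R (fun k => p x k)
                rw [hs.2 x] at h3
                have h4 : 0 ≤ ∑ k ∈ R, p x k :=
                  Finset.sum_nonneg fun k _ => hs.1 x k
                linarith
              linarith
        have hfm : p x (f x) * |D (f x)| ≤ p x (f x) * ((1 - c^n) * M) :=
          mul_le_mul_of_nonneg_left hIH ha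
        have hcn0 : (0:ℝ) ≤ c^n := pow_nonneg (le_of_lt hc0) n
        have hb : |D x| ≤ p x (f x) * ((1 - c^n) * M) + (1 - p x (f x)) * M := by
          rw [hsplit] at habs
          linarith
        refine hb.trans ?_
        have h1 : c * c^n ≤ p x (f x) * c^n := mul_le_mul_of_nonneg_right hcle hcn0
        nlinarith [pow_succ c n]
  obtain ⟨n, hn⟩ := hf.2 i₀
  have hi₀R : i₀ ∉ R := Finset.mem_compl.1 hi₀mem
  have hMle := claim n i₀ hi₀R hn
  have hcn : 0 < c^n := pow_pos hc0 n
  have hMz : M = 0 := le_antisymm (by nlinarith) hM0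
  have hDi : D i = 0 := by
    have h1 := hMb i
    rw [hMz] at h1
    exact abs_eq_zero.1 (le_antisymm h1 (abs_nonneg _))
  have h2 : hitProb p R i j - wroot p R i j / w p R = 0 := hDi
  linarith
end

section
/- Tree algebra identity: for a stochastic matrix P on finite S, a subset R, and j ∈ S \ R, one has w(R ∪ {j}) = w(R) + Σ_{k ∈ S \ R} p_{jk} · w_{kj}(R ∪ {j}), where w and w_{kj} denote forest weights as defined by root sets. -/
open Finset

section Aux

variable {S : Type*} [Fintype S] [DecidableEq S]

private lemma iterate_update_of_ne {f : S → S} {j k : S}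
    (h : ∀ n, f^[n] k ≠ j) : ∀ m, (Function.update f j k)^[m] k = f^[m] k := by
  intro m
  induction m with
  | zero => rfl
  | succ m ih =>
    rw [Function.iterate_succ_apply', Function.iterate_succ_apply', ih,
        Function.update_of_ne (h m)]

/-- Attaching the edge `j → k` to a forest rooted at `insert j R`
(where `k` is not in the tree of `j`) gives a forest rooted at `R`. -/
private lemma isForest_update {R : Finset S} {j : S} (hj : j ∉ R) {f : S → S} {k : S}
    (hf : IsForest (insert j R) f) (hk : ∀ n, f^[n] k ≠ j) :
    IsForest R (Function.update f j k) := by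
  set g := Function.update f j k with hg
  have hgj : g j = k := Function.update_self j k f
  have hgk : ∃ m, g^[m] k ∈ R := by
    obtain ⟨n, hn⟩ := hf.2 k
    rcases mem_insert.mp hn with h | h
    · exact absurd h (hk n)
    · exact ⟨n, by rw [iterate_update_of_ne hk]; exact h⟩
  constructor
  · intro i hi
    have hij : i ≠ j := fun h => hj (h ▸ hi)
    rw [hg, Function.update_of_ne hij, hf.1 i (mem_insert_of_mem hi)]
  · intro i
    obtain ⟨n, hn⟩ := hf.2 i
    induction n generalizing i with
    | zero =>
      simp only [Function.iterate_zero, id] at hn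
      rcases mem_insert.mp hn with h | h
      · obtain ⟨m, hm⟩ := hgk
        exact ⟨m + 1, by rw [Function.iterate_succ_apply, h, hgj]; exact hm⟩
      · exact ⟨0, h⟩
    | succ n ih =>
      by_cases hij : i = j
      · subst hij
        obtain ⟨m, hm⟩ := hgk
        exact ⟨m + 1, by rwa [Function.iterate_succ_apply, hgj]⟩
      · obtain ⟨m, hm⟩ := ih (f i) (by rwa [Function.iterate_succ_apply] at hn)
        refine ⟨m + 1, ?_⟩
        rwa [Function.iterate_succ_apply, hg, Function.update_of_ne hij]

private lemma exists_g_iter {g : S → S} {j : S} :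
    ∀ n (w : S), (Function.update g j j)^[n] w = j → ∃ m, g^[m] w = j := by
  intro n
  induction n with
  | zero => exact fun w h => ⟨0, h⟩
  | succ n ih =>
    intro w h
    by_cases hw : w = j
    · exact ⟨0, hw⟩
    · rw [Function.iterate_succ_apply, Function.update_of_ne hw] at h
      obtain ⟨m, hm⟩ := ih (g w) h
      exact ⟨m + 1, by rwa [Function.iterate_succ_apply]⟩

private lemma no_cycle {R : Finset S} {g : S → S} (hg : IsForest R g) {j : S} (hj : j ∉ R)
    {c : ℕ} (hc : 0 < c) (hcyc : g^[c] j = j) : False := by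
  obtain ⟨N, hN⟩ := hg.2 j
  have hN0 : N ≠ 0 := by rintro rfl; exact hj hN
  have hstab : ∀ t, g^[N + t] j = g^[N] j := by
    intro t
    induction t with
    | zero => rfl
    | succ t ih =>
      rw [show N + (t + 1) = (N + t) + 1 by omega, Function.iterate_succ_apply', ih,
        hg.1 _ hN]
  have hmul : g^[c * N] j = j := by
    rw [Function.iterate_mul]
    exact Function.iterate_fixed hcyc N
  have hle : N ≤ c * N := Nat.le_mul_of_pos_left N hc
  have : g^[c * N] j = g^[N] j := by
    rw [show c * N = N + (c * N - N) by omega]; exact hstab _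
  exact hj (by rw [← hmul, this]; exact hN)

/-- Detaching the edge at `j` from a forest rooted at `R` gives a forest rooted at
`insert j R` in which `g j` is not in the tree of `j`. -/
private lemma isForest_unupdate {R : Finset S} {j : S} (hj : j ∉ R) {g : S → S}
    (hg : IsForest R g) :
    IsForest (insert j R) (Function.update g j j) ∧
      ∀ n, (Function.update g j j)^[n] (g j) ≠ j := by
  set f := Function.update g j j with hf
  have hreach : ∀ n i, g^[n] i ∈ R → ∃ m, f^[m] i ∈ insert j R := by
    intro n
    induction n with
    | zero => exact fun i h => ⟨0, mem_insert_of_mem h⟩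
    | succ n ih =>
      intro i h
      by_cases hij : i = j
      · exact ⟨0, by simp [hij]⟩
      · obtain ⟨m, hm⟩ := ih (g i) (by rwa [Function.iterate_succ_apply] at h)
        refine ⟨m + 1, ?_⟩
        rwa [Function.iterate_succ_apply, hf, Function.update_of_ne hij]
  refine ⟨⟨?_, ?_⟩, ?_⟩
  · intro i hi
    rcases mem_insert.mp hi with h | h
    · rw [h]; exact Function.update_self j j g
    · have hij : i ≠ j := fun hh => hj (hh ▸ h)
      rw [hf, Function.update_of_ne hij, hg.1 i h]
  · intro i
    obtain ⟨n, hn⟩ := hg.2 i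
    exact hreach n i hn
  · intro n hn
    obtain ⟨m, hm⟩ := exists_g_iter n (g j) hn
    have hcyc : g^[m + 1] j = j := by rwa [Function.iterate_succ_apply]
    exact no_cycle hg hj (Nat.succ_pos m) hcyc

end Aux

/-- Tree algebra identity: `w(R ∪ {j}) = w(R) + ∑_{k ∈ S∖R} p_{jk} w_{kj}(R ∪ {j})`. -/
theorem tree_algebra_identity {S : Type*} [Fintype S] [DecidableEq S]
    (p : S → S → ℝ) (hs : IsStochastic p) (R : Finset S) (j : S) (hj : j ∉ R) :
    w p (insert j R) = w p R + ∑ k ∈ Rᶜ, p j k * wroot p (insert j R) k j := by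
  classical
  set A := insert j R with hA
  have hjA : j ∈ A := mem_insert_self j R
  -- expand w p A as a double sum, splitting on whether k is in the tree of j
  have expand : ∀ f : S → S, (if IsForest A f then forestWt p A f else 0)
      = ∑ k : S, ((if IsForest A f ∧ (∃ n, f^[n] k = j) then p j k * forestWt p A f else 0)
        + (if IsForest A f ∧ ¬(∃ n, f^[n] k = j) then p j k * forestWt p A f else 0)) := by
    intro f
    by_cases hf : IsForest A f
    · have hterm : ∀ k : S,
          ((if IsForest A f ∧ (∃ n, f^[n] k = j) then p j k * forestWt p A f else 0)
            + (if IsForest A f ∧ ¬(∃ n, f^[n] k = j) then p j k * forestWt p A f else 0))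
          = p j k * forestWt p A f := by
        intro k
        by_cases h : ∃ n, f^[n] k = j <;> simp [hf, h]
      rw [Finset.sum_congr rfl fun k _ => hterm k, ← Finset.sum_mul, hs.2 j, one_mul,
        if_pos hf]
    · simp [hf]
  have hsplit : w p A
      = (∑ k : S, ∑ f : S → S,
          if IsForest A f ∧ (∃ n, f^[n] k = j) then p j k * forestWt p A f else 0)
        + (∑ k : S, ∑ f : S → S,
          if IsForest A f ∧ ¬(∃ n, f^[n] k = j) then p j k * forestWt p A f else 0) := by
    rw [w, Finset.sum_congr rfl fun f _ => expand f, Finset.sum_comm]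
    rw [← Finset.sum_add_distrib]
    exact Finset.sum_congr rfl fun k _ => Finset.sum_add_distrib
  -- the cycle part
  have part1 : (∑ k : S, ∑ f : S → S,
        if IsForest A f ∧ (∃ n, f^[n] k = j) then p j k * forestWt p A f else 0)
      = ∑ k ∈ Rᶜ, p j k * wroot p A k j := by
    rw [← Finset.sum_subset (Finset.subset_univ Rᶜ)]
    · refine Finset.sum_congr rfl fun k _ => ?_
      rw [wroot, Finset.mul_sum]
      refine Finset.sum_congr rfl fun f _ => ?_
      by_cases h : IsForest A f ∧ ∃ n, f^[n] k = j <;> simp [h]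
    · intro k _ hk
      rw [Finset.mem_compl, not_not] at hk
      refine Finset.sum_eq_zero fun f _ => ?_
      rw [if_neg]
      rintro ⟨hf, n, hn⟩
      have : f^[n] k = k := Function.iterate_fixed (hf.1 k (mem_insert_of_mem hk)) n
      rw [this] at hn
      exact hj (hn ▸ hk)
  -- the bijection part
  have hRc : Rᶜ = insert j Aᶜ := by
    ext i
    simp only [mem_compl, mem_insert, hA, not_or]
    constructor
    · intro h
      by_cases hij : i = j
      · exact Or.inl hij
      · exact Or.inr ⟨hij, h⟩
    · rintro (rfl | ⟨_, h⟩)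
      · exact hj
      · exact h
  have hjAc : j ∉ Aᶜ := by simp [hjA]
  have part2 : (∑ k : S, ∑ f : S → S,
        if IsForest A f ∧ ¬(∃ n, f^[n] k = j) then p j k * forestWt p A f else 0)
      = w p R := by
    have e1 : (∑ k : S, ∑ f : S → S,
          if IsForest A f ∧ ¬(∃ n, f^[n] k = j) then p j k * forestWt p A f else 0)
        = ∑ x ∈ ((univ : Finset S) ×ˢ (univ : Finset (S → S))).filter
            (fun x => IsForest A x.2 ∧ ¬(∃ n, x.2^[n] x.1 = j)),
            p j x.1 * forestWt p A x.2 := by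
      rw [Finset.sum_filter, Finset.sum_product]
    have e2 : w p R = ∑ g ∈ (univ : Finset (S → S)).filter (fun g => IsForest R g),
        forestWt p R g := by
      rw [Finset.sum_filter, w]
    rw [e1, e2]
    refine Finset.sum_nbij' (fun x => Function.update x.2 j x.1)
      (fun g => (g j, Function.update g j j)) ?_ ?_ ?_ ?_ ?_
    · rintro ⟨k, f⟩ hx
      rw [Finset.mem_filter] at hx
      obtain ⟨-, hf, hnc⟩ := hx
      simp only [Finset.mem_filter, Finset.mem_univ, true_and]
      exact isForest_update hj hf (fun n h => hnc ⟨n, h⟩)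
    · intro g hg
      rw [Finset.mem_filter] at hg
      obtain ⟨-, hgf⟩ := hg
      obtain ⟨h1, h2⟩ := isForest_unupdate hj hgf
      simp only [Finset.mem_filter, Finset.mem_product, Finset.mem_univ, true_and, and_self]
      exact ⟨h1, fun ⟨n, hn⟩ => h2 n hn⟩
    · rintro ⟨k, f⟩ hx
      rw [Finset.mem_filter] at hx
      obtain ⟨-, hf, -⟩ := hx
      have hfj : f j = j := hf.1 j hjA
      have h1 : Function.update f j k j = k := Function.update_self j k f
      have h2 : Function.update (Function.update f j k) j j = f := by
        rw [Function.update_idem]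
        funext x
        by_cases h : x = j
        · rw [h, Function.update_self, hfj]
        · rw [Function.update_of_ne h]
      exact Prod.ext h1 h2
    · intro g hg
      simp only [Function.update_idem, Function.update_eq_self]
    · rintro ⟨k, f⟩ hx
      rw [Finset.mem_filter] at hx
      obtain ⟨-, hf, -⟩ := hx
      simp only [forestWt]
      rw [hRc, Finset.prod_insert hjAc, Function.update_self]
      congr 1
      refine Finset.prod_congr rfl fun i hi => ?_
      have hij : i ≠ j := fun h => hjAc (h ▸ hi)
      rw [Function.update_of_ne hij]
  rw [hsplit, part1, part2, add_comm]
end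

section
/- Cayley's forest recursion via uniform chains: if c(n,k) denotes the number of forests labeled by {1,…,n} with root set {1,…,k}, then c(n, k+1) = (k+1)·c(n,k)/(k·n) for 1 ≤ k ≤ n − 2. -/
open Finset

/-- `cayley n k`: the number of forests labeled by `{1,…,n}` with root set `{1,…,k}`. -/
noncomputable def cayley (n k : ℕ) : ℕ :=
  Nat.card {f : Fin n → Fin n // IsForest (Finset.univ.filter fun i : Fin n => (i : ℕ) < k) f}

section helpers
set_option linter.unusedSectionVars false
variable {S : Type*} [Fintype S] [DecidableEq S]

lemma iterate_fixed {f : S → S} {R : Finset S} (hf : ∀ i ∈ R, f i = i)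
    {j : S} (hj : j ∈ R) (d : ℕ) : f^[d] j = j := by
  induction d with
  | zero => rfl
  | succ d ih => rw [Function.iterate_succ_apply', ih, hf j hj]

lemma iterate_stay {f : S → S} {R : Finset S} (hf : ∀ i ∈ R, f i = i)
    {i : S} {t s : ℕ} (h : f^[t] i ∈ R) (hts : t ≤ s) : f^[s] i = f^[t] i := by
  obtain ⟨d, rfl⟩ := Nat.exists_eq_add_of_le hts
  rw [Nat.add_comm, Function.iterate_add_apply]
  exact iterate_fixed hf h d

lemma root_unique {f : S → S} {R : Finset S} (hf : ∀ i ∈ R, f i = i)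
    {i j j' : S} {a b : ℕ} (ha : f^[a] i = j) (hj : j ∈ R)
    (hb : f^[b] i = j') (hj' : j' ∈ R) : j = j' := by
  rcases le_total a b with h | h
  · rw [← ha, ← hb, iterate_stay hf (ha ▸ hj) h]
  · rw [← ha, ← hb, ← iterate_stay hf (hb ▸ hj') h]

lemma no_return {f : S → S} {R : Finset S} (hfix : ∀ i ∈ R, f i = i)
    (habs : ∀ i, ∃ m, f^[m] i ∈ R) {j0 : S} (hj0 : j0 ∉ R) (m : ℕ) :
    f^[m + 1] j0 ≠ j0 := by
  intro hcyc
  obtain ⟨t, ht⟩ := habs j0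
  have hper : ∀ a : ℕ, f^[a * (m + 1)] j0 = j0 := by
    intro a
    induction a with
    | zero => simp
    | succ a ih => rw [Nat.succ_mul, Function.iterate_add_apply, hcyc, ih]
  have hge : t ≤ (t + 1) * (m + 1) := by nlinarith
  have h2 := iterate_stay hfix ht hge
  rw [hper (t + 1)] at h2
  rw [← h2] at ht
  exact hj0 ht

lemma iterate_agree (g f : S → S) (j0 : S)
    (hgf : ∀ x, x ≠ j0 → g x = f x) :
    ∀ (m : ℕ) (i : S), (∀ t < m, f^[t] i ≠ j0) → g^[m] i = f^[m] i := by
  intro m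
  induction m with
  | zero => intro i _; simp
  | succ m ih =>
    intro i h
    have hi : i ≠ j0 := by simpa using h 0 (Nat.succ_pos m)
    rw [Function.iterate_succ_apply, Function.iterate_succ_apply, hgf i hi]
    exact ih (f i) (fun t ht => by
      have := h (t + 1) (Nat.succ_lt_succ ht)
      rwa [Function.iterate_succ_apply] at this)

lemma conj_iterate (σ : Equiv.Perm S) (f : S → S) (m : ℕ) (x : S) :
    (fun y => σ (f (σ.symm y)))^[m] x = σ (f^[m] (σ.symm x)) := by
  induction m generalizing x with
  | zero => simp
  | succ m ih =>
    rw [Function.iterate_succ_apply, ih]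
    simp [Function.iterate_succ_apply]

lemma forest_conj (σ : Equiv.Perm S) {R : Finset S} (hσ : ∀ i, σ i ∈ R ↔ i ∈ R)
    {f : S → S} (hf : IsForest R f) : IsForest R (fun y => σ (f (σ.symm y))) := by
  refine ⟨?_, ?_⟩
  · intro i hi
    have h1 : σ.symm i ∈ R := by rw [← hσ]; simpa using hi
    show σ (f (σ.symm i)) = i
    rw [hf.1 _ h1]; simp
  · intro i
    obtain ⟨m, hm⟩ := hf.2 (σ.symm i)
    exact ⟨m, by rw [conj_iterate]; exact (hσ _).mpr hm⟩

lemma forest_update_root {f : S → S} {R : Finset S} {j0 : S}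
    (hf : IsForest R f) : IsForest (insert j0 R) (Function.update f j0 j0) := by
  obtain ⟨hfix, habs⟩ := hf
  refine ⟨?_, ?_⟩
  · intro i hi
    rcases Finset.mem_insert.mp hi with rfl | hi
    · simp
    · rcases eq_or_ne i j0 with rfl | hne
      · simp
      · rw [Function.update_of_ne hne]; exact hfix i hi
  · intro i
    obtain ⟨m, hm⟩ := habs i
    induction m generalizing i with
    | zero => exact ⟨0, Finset.mem_insert_of_mem hm⟩
    | succ m ih =>
      rcases eq_or_ne i j0 with rfl | hne
      · exact ⟨0, Finset.mem_insert_self _ _⟩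
      · obtain ⟨m', hm'⟩ := ih (f i) (by rwa [Function.iterate_succ_apply] at hm)
        exact ⟨m' + 1, by rwa [Function.iterate_succ_apply, Function.update_of_ne hne]⟩

lemma forest_notreach {f : S → S} {R : Finset S} {j0 : S}
    (hf : IsForest R f) (hj0 : j0 ∉ R) :
    ∀ m, (Function.update f j0 j0)^[m] (f j0) ≠ j0 := by
  have hstep : ∀ t, f^[t] (f j0) ≠ j0 := fun t => by
    rw [← Function.iterate_succ_apply]
    exact no_return hf.1 hf.2 hj0 t
  intro m
  rw [iterate_agree (Function.update f j0 j0) f j0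
    (fun x hx => Function.update_of_ne hx _ _) m _ (fun t _ => hstep t)]
  exact hstep m

lemma forest_open {f : S → S} {R : Finset S} {j0 : S} (hj0 : j0 ∉ R)
    (hf : IsForest (insert j0 R) f) {v : S} (hv : ¬ ∃ m : ℕ, f^[m] v = j0) :
    IsForest R (Function.update f j0 v) := by
  classical
  obtain ⟨hfix, habs⟩ := hf
  set g := Function.update f j0 v with hg
  have hag : ∀ x, x ≠ j0 → g x = f x := fun x hx => Function.update_of_ne hx _ _
  have sub1 : ∀ x, (¬ ∃ s : ℕ, f^[s] x = j0) → ∃ m, g^[m] x ∈ R := by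
    intro x hx
    obtain ⟨m, hm⟩ := habs x
    have hne : ∀ t, f^[t] x ≠ j0 := fun t ht => hx ⟨t, ht⟩
    refine ⟨m, ?_⟩
    rw [iterate_agree g f j0 hag m x (fun t _ => hne t)]
    rcases Finset.mem_insert.mp hm with h | h
    · exact absurd h (hne m)
    · exact h
  refine ⟨?_, ?_⟩
  · intro i hi
    have hne : i ≠ j0 := fun h => hj0 (h ▸ hi)
    rw [hag i hne]
    exact hfix i (Finset.mem_insert_of_mem hi)
  · intro i
    by_cases hreach : ∃ s : ℕ, f^[s] i = j0
    · set s := Nat.find hreach with hs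
      have hss : f^[s] i = j0 := Nat.find_spec hreach
      have hmin : ∀ t < s, f^[t] i ≠ j0 := fun t ht => Nat.find_min hreach ht
      have hgs : g^[s] i = j0 := by rw [iterate_agree g f j0 hag s i hmin]; exact hss
      have hgs1 : g^[s + 1] i = v := by
        rw [Function.iterate_succ_apply', hgs, hg, Function.update_self]
      obtain ⟨m, hm⟩ := sub1 v hv
      exact ⟨m + (s + 1), by rw [Function.iterate_add_apply, hgs1]; exact hm⟩
    · exact sub1 i hreach

lemma card_filter_lt (n m : ℕ) (h : m ≤ n) :
    ((Finset.univ : Finset (Fin n)).filter fun i : Fin n => (i : ℕ) < m).card = m := by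
  have he : ((Finset.univ : Finset (Fin n)).filter fun i : Fin n => (i : ℕ) < m)
      = (Finset.range m).attachFin (fun a ha => lt_of_lt_of_le (Finset.mem_range.mp ha) h) := by
    ext i
    simp [Finset.mem_attachFin]
  rw [he, Finset.card_attachFin, Finset.card_range]

end helpers


/-- Cayley's forest recursion: `c(n,k+1) = (k+1)·c(n,k)/(k·n)` for `1 ≤ k ≤ n-2`. -/
theorem cayley_recursion (n k : ℕ) (h1 : 1 ≤ k) (h2 : k ≤ n - 2) :
    cayley n (k + 1) * (k * n) = (k + 1) * cayley n k := by
  classical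
  have hn : k + 2 ≤ n := by omega
  set Rk : Finset (Fin n) := Finset.univ.filter (fun i : Fin n => (i : ℕ) < k) with hRkdef
  set Rk1 : Finset (Fin n) := Finset.univ.filter (fun i : Fin n => (i : ℕ) < k + 1) with hRk1def
  set j0 : Fin n := ⟨k, by omega⟩ with hj0def
  have hj0R1 : j0 ∈ Rk1 := by simp [hRk1def, hj0def]
  have hj0R : j0 ∉ Rk := by simp [hRkdef, hj0def]
  have hins : Rk1 = insert j0 Rk := by
    ext i
    simp only [hRk1def, hRkdef, Finset.mem_insert, Finset.mem_filter, Finset.mem_univ, true_and]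
    constructor
    · intro hi
      rcases Nat.lt_succ_iff_lt_or_eq.mp hi with h | h
      · exact Or.inr h
      · exact Or.inl (Fin.ext h)
    · rintro (rfl | h)
      · simp [hj0def]
      · omega
  set A : Finset (Fin n → Fin n) := Finset.univ.filter (fun f => IsForest Rk f) with hA
  set B : Finset (Fin n → Fin n) := Finset.univ.filter (fun f => IsForest Rk1 f) with hB
  have hcayA : cayley n k = A.card := by
    rw [hA, hRkdef]
    rw [cayley, Nat.card_eq_fintype_card, Fintype.card_subtype]
  have hcayB : cayley n (k + 1) = B.card := by
    rw [hB, hRk1def]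
    rw [cayley, Nat.card_eq_fintype_card, Fintype.card_subtype]
  set T : (Fin n → Fin n) → Fin n → ℕ :=
    fun f j => (Finset.univ.filter fun v : Fin n => ∃ m : ℕ, f^[m] v = j).card with hT
  -- Step 1: the trees partition the vertex set
  have step1 : ∀ f ∈ B, (∑ j ∈ Rk1, T f j) = n := by
    intro f hfB
    rw [hB, Finset.mem_filter] at hfB
    have hfix := hfB.2.1
    have habs := hfB.2.2
    have hdisj : ∀ j ∈ Rk1, ∀ j' ∈ Rk1, j ≠ j' →
        Disjoint (Finset.univ.filter fun v : Fin n => ∃ m : ℕ, f^[m] v = j)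
          (Finset.univ.filter fun v : Fin n => ∃ m : ℕ, f^[m] v = j') := by
      intro j hj j' hj' hne
      rw [Finset.disjoint_left]
      intro v hv hv'
      simp only [Finset.mem_filter, Finset.mem_univ, true_and] at hv hv'
      obtain ⟨a, ha⟩ := hv
      obtain ⟨b, hb⟩ := hv'
      exact hne (root_unique hfix ha hj hb hj')
    simp only [hT]
    rw [← Finset.card_biUnion hdisj]
    have huniv : (Rk1.biUnion fun j => Finset.univ.filter fun v : Fin n => ∃ m : ℕ, f^[m] v = j)
        = Finset.univ := by
      ext v
      simp only [Finset.mem_biUnion, Finset.mem_filter, Finset.mem_univ, true_and, iff_true]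
      obtain ⟨m, hm⟩ := habs v
      exact ⟨f^[m] v, hm, m, rfl⟩
    rw [huniv]
    simp
  -- Step 2: by symmetry, all trees have the same total size
  have step2 : ∀ j ∈ Rk1, (∑ f ∈ B, T f j) = ∑ f ∈ B, T f j0 := by
    intro j hj
    set σ : Equiv.Perm (Fin n) := Equiv.swap j j0 with hσ
    have hσj : σ j = j0 := Equiv.swap_apply_left j j0
    have hσR : ∀ i : Fin n, σ i ∈ Rk1 ↔ i ∈ Rk1 := by
      intro i
      rcases eq_or_ne i j with rfl | hij
      · rw [hσj]; simp [hj, hj0R1]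
      rcases eq_or_ne i j0 with rfl | hij0
      · rw [hσ, Equiv.swap_apply_right]; simp [hj, hj0R1]
      · rw [hσ, Equiv.swap_apply_of_ne_of_ne hij hij0]
    have harrow : ∀ f : Fin n → Fin n,
        (Equiv.arrowCongr σ σ) f = fun y => σ (f (σ.symm y)) := fun f => rfl
    have hσR' : ∀ i : Fin n, σ.symm i ∈ Rk1 ↔ i ∈ Rk1 := by
      intro i
      have := (hσR (σ.symm i)).symm
      rwa [Equiv.apply_symm_apply] at this
    refine Finset.sum_equiv (Equiv.arrowCongr σ σ) ?_ ?_
    · intro f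
      rw [hB]
      simp only [Finset.mem_filter, Finset.mem_univ, true_and]
      constructor
      · intro hf
        rw [harrow f]
        exact forest_conj σ hσR hf
      · intro hf
        have h2 := forest_conj σ.symm hσR' hf
        have h3 : (fun y => σ.symm (((Equiv.arrowCongr σ σ) f) (σ.symm.symm y))) = f := by
          funext y
          rw [harrow f]
          simp
        rwa [h3] at h2
    · intro f hf
      simp only [hT]
      apply Finset.card_nbij' (i := fun v => σ v) (j := fun v => σ.symm v)
      · intro a ha
        simp only [Finset.mem_coe, Finset.mem_filter, Finset.mem_univ, true_and] at ha ⊢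
        obtain ⟨m, hm⟩ := ha
        refine ⟨m, ?_⟩
        rw [harrow f, conj_iterate, Equiv.symm_apply_apply, hm, hσj]
      · intro a ha
        simp only [Finset.mem_coe, Finset.mem_filter, Finset.mem_univ, true_and] at ha ⊢
        obtain ⟨m, hm⟩ := ha
        refine ⟨m, ?_⟩
        rw [harrow f, conj_iterate] at hm
        rw [← hσj] at hm
        exact σ.injective hm
      · intro a _; simp
      · intro a _; simp
  -- Step 3: forests with root set Rk correspond to pairs (forest with roots Rk1, vertex
  -- outside the tree of j0)
  have step3 : A.card = ∑ f ∈ B,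
      (Finset.univ.filter fun v : Fin n => ¬ ∃ m : ℕ, f^[m] v = j0).card := by
    rw [← Finset.card_sigma]
    apply Finset.card_bij (fun f _ => (⟨Function.update f j0 j0, f j0⟩ :
        Σ _ : Fin n → Fin n, Fin n))
    · intro f hf
      rw [hA, Finset.mem_filter] at hf
      have hf' := hf.2
      rw [Finset.mem_sigma]
      constructor
      · rw [hB]
        simp only [Finset.mem_filter, Finset.mem_univ, true_and]
        rw [hins]
        exact forest_update_root hf'
      · simp only [Finset.mem_filter, Finset.mem_univ, true_and]
        rintro ⟨m, hm⟩
        exact forest_notreach hf' hj0R m hm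
    · intro f hfA f' hf'A heq
      have he1 : Function.update f j0 j0 = Function.update f' j0 j0 :=
        congrArg (fun s : Σ _ : Fin n → Fin n, Fin n => s.1) heq
      have he2 : f j0 = f' j0 :=
        congrArg (fun s : Σ _ : Fin n → Fin n, Fin n => s.2) heq
      funext x
      rcases eq_or_ne x j0 with rfl | hx
      · exact he2
      · have := congrFun he1 x
        rwa [Function.update_of_ne hx, Function.update_of_ne hx] at this
    · rintro ⟨f', v⟩ hb
      rw [Finset.mem_sigma] at hb
      obtain ⟨hf'B, hv⟩ := hb
      rw [hB, Finset.mem_filter] at hf'B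
      have hf' := hf'B.2
      simp only [Finset.mem_filter, Finset.mem_univ, true_and] at hv
      have hroot : f' j0 = j0 := hf'.1 j0 hj0R1
      refine ⟨Function.update f' j0 v, ?_, ?_⟩
      · rw [hA, Finset.mem_filter]
        exact ⟨Finset.mem_univ _, forest_open hj0R (hins ▸ hf') hv⟩
      · have h1 : Function.update (Function.update f' j0 v) j0 j0 = f' := by
          funext x
          rcases eq_or_ne x j0 with rfl | hx
          · rw [Function.update_self]; exact hroot.symm
          · rw [Function.update_of_ne hx, Function.update_of_ne hx]
        rw [h1, Function.update_self]
    -- done with step3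
  have hcard1 : Rk1.card = k + 1 := by
    rw [hRk1def]; exact card_filter_lt n (k + 1) (by omega)
  have e1 : ∑ j ∈ Rk1, (∑ f ∈ B, T f j) = B.card * n := by
    rw [Finset.sum_comm, Finset.sum_congr rfl step1, Finset.sum_const, smul_eq_mul]
  have e2 : ∑ j ∈ Rk1, (∑ f ∈ B, T f j) = (k + 1) * (∑ f ∈ B, T f j0) := by
    rw [Finset.sum_congr rfl step2, Finset.sum_const, hcard1, smul_eq_mul]
  have hsplit : ∀ f : Fin n → Fin n,
      (Finset.univ.filter fun v : Fin n => ¬ ∃ m : ℕ, f^[m] v = j0).card + T f j0 = n := by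
    intro f
    simp only [hT]
    rw [Nat.add_comm, Finset.card_filter_add_card_filter_not]
    simp
  have e3 : A.card + (∑ f ∈ B, T f j0) = B.card * n := by
    rw [step3, ← Finset.sum_add_distrib, Finset.sum_congr rfl (fun f _ => hsplit f),
      Finset.sum_const, smul_eq_mul]
  have h5 : (k + 1) * (∑ f ∈ B, T f j0) = B.card * n := by rw [← e2, e1]
  rw [hcayA, hcayB]
  have h8 : (k + 1) * A.card + (k + 1) * (∑ f ∈ B, T f j0) = (k + 1) * (B.card * n) := by
    rw [← Nat.mul_add, e3]
  rw [h5] at h8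
  have h9 : (k + 1) * (B.card * n) = B.card * (k * n) + B.card * n := by ring
  rw [h9] at h8
  exact (Nat.add_right_cancel h8).symm
end

section
/- Cayley's formula for rooted forests: for 1 ≤ k ≤ n, the number of forests labeled by {1,…,n} with root set {1,…,k} equals k · n^{n−k−1}. -/
open Finset

open Function

set_option linter.unusedSectionVars false
set_option linter.unusedVariables false
set_option maxHeartbeats 1000000


section Iter
variable {S : Type*} [Fintype S] [DecidableEq S]

omit [Fintype S] [DecidableEq S] in
/-- iterate modulo a period -/
theorem iter_mod {g : S → S} {z : S} {p : ℕ} (hz : g^[p] z = z) (t : ℕ) :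
    g^[t] z = g^[t % p] z := by
  conv_lhs => rw [← Nat.div_add_mod t p]
  rw [add_comm, Function.iterate_add_apply, Function.iterate_mul]
  congr 1
  exact Function.iterate_fixed hz _

omit [DecidableEq S] in
/-- pigeonhole: some iterate is periodic with small period -/
theorem exists_periodic_iter (g : S → S) (y : S) :
    ∃ a b : ℕ, a < b ∧ b ≤ Fintype.card S ∧ g^[b - a] (g^[a] y) = g^[a] y := by
  have h : ¬ Function.Injective (fun i : Fin (Fintype.card S + 1) => g^[(i : ℕ)] y) := by
    intro h
    have := Fintype.card_le_of_injective _ h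
    simp at this
  simp only [Function.Injective, not_forall] at h
  obtain ⟨i, j, hij, hne⟩ := h
  have hne' : i ≠ j := hne
  rcases lt_or_gt_of_ne hne' with h | h
  · refine ⟨i, j, h, Nat.lt_succ_iff.mp j.2, ?_⟩
    rw [← Function.iterate_add_apply, Nat.sub_add_cancel (le_of_lt h), hij]
  · refine ⟨j, i, h, Nat.lt_succ_iff.mp i.2, ?_⟩
    rw [← Function.iterate_add_apply, Nat.sub_add_cancel (le_of_lt h), ← hij]

/-- if y is periodic then it has a period between 1 and card S -/
theorem periodic_small {g : S → S} {y : S} {t : ℕ} (ht : 0 < t) (hy : g^[t] y = y) :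
    ∃ u, 0 < u ∧ u ≤ Fintype.card S ∧ g^[u] y = y := by
  obtain ⟨a, b, hab, hbcard, hba⟩ := exists_periodic_iter g y
  have hmult : ∀ q, g^[t * q] y = y := by
    intro q; rw [Function.iterate_mul]; exact Function.iterate_fixed hy q
  have hba' : 0 < b - a := Nat.sub_pos_of_lt hab
  have key : ∀ s, a ≤ s → g^[s + (b - a)] y = g^[s] y := by
    intro s hs
    rw [show s + (b - a) = ((s - a) + (b - a)) + a by omega,
      Function.iterate_add_apply, Function.iterate_add_apply, hba,
      ← Function.iterate_add_apply, show s - a + a = s by omega]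
  have hb1 : b - a ≤ Fintype.card S := by omega
  refine ⟨b - a, hba', hb1, ?_⟩
  have h1 : g^[t * (a + 1)] y = y := hmult _
  have h2 : a ≤ t * (a + 1) := by nlinarith
  calc g^[b-a] y = g^[b-a] (g^[t*(a+1)] y) := by rw [h1]
    _ = g^[(b-a) + t*(a+1)] y := (Function.iterate_add_apply g (b-a) (t*(a+1)) y).symm
    _ = g^[t*(a+1) + (b-a)] y := by rw [add_comm]
    _ = g^[t*(a+1)] y := key _ h2
    _ = y := h1

omit [Fintype S] [DecidableEq S] in
/-- injectivity on periodic points -/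
theorem periodic_inj {g : S → S} {x y : S} {t s : ℕ} (ht : 0 < t) (hs : 0 < s)
    (hx : g^[t] x = x) (hy : g^[s] y = y) (h : g x = g y) : x = y := by
  have hxT : g^[t * s] x = x := by
    rw [Function.iterate_mul]; exact Function.iterate_fixed hx s
  have hyT : g^[t * s] y = y := by
    rw [mul_comm, Function.iterate_mul]; exact Function.iterate_fixed hy t
  have hT : 0 < t * s := Nat.mul_pos ht hs
  calc x = g^[t*s] x := hxT.symm
    _ = g^[t*s - 1] (g x) := by
        conv_lhs => rw [show t*s = (t*s - 1) + 1 by omega]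
        rw [Function.iterate_add_apply]; simp
    _ = g^[t*s - 1] (g y) := by rw [h]
    _ = g^[t*s] y := by
        conv_rhs => rw [show t*s = (t*s - 1) + 1 by omega]
        rw [Function.iterate_add_apply]; simp
    _ = y := hyT

omit [Fintype S] [DecidableEq S] in
theorem periodic_apply {g : S → S} {y : S} {t : ℕ} (hy : g^[t] y = y) :
    g^[t] (g y) = g y := by
  rw [← Function.iterate_succ_apply, Function.iterate_succ_apply', hy]

end Iter

section Rank
variable {S : Type*} [LinearOrder S] [DecidableEq S]

/-- rank of `y` in `C`: the number of elements of `C` below `y`. -/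
def rnk (C : Finset S) (y : S) : ℕ := (C.filter (· < y)).card

theorem rnk_lt {C : Finset S} {y : S} (hy : y ∈ C) : rnk C y < C.card := by
  apply Finset.card_lt_card
  constructor
  · exact Finset.filter_subset _ _
  · intro hsub
    have := hsub hy
    simp at this

theorem rnk_strictMono {C : Finset S} {y z : S} (hy : y ∈ C) (hyz : y < z) :
    rnk C y < rnk C z := by
  apply Finset.card_lt_card
  constructor
  · intro w hw
    rw [Finset.mem_filter] at hw ⊢
    exact ⟨hw.1, lt_trans hw.2 hyz⟩
  · intro hsub
    have := hsub (Finset.mem_filter.mpr ⟨hy, hyz⟩)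
    simp at this

theorem rnk_injOn {C : Finset S} {y z : S} (hy : y ∈ C) (hz : z ∈ C)
    (h : rnk C y = rnk C z) : y = z := by
  rcases lt_trichotomy y z with hlt | he | hlt
  · exact absurd h (Nat.ne_of_lt (rnk_strictMono hy hlt))
  · exact he
  · exact absurd h.symm (Nat.ne_of_lt (rnk_strictMono hz hlt))

theorem rnk_lt_of_mem_lt {C : Finset S} {y z : S} (hy : y ∈ C) (hz : z ∈ C)
    (h : rnk C y < rnk C z) : y < z := by
  rcases lt_trichotomy y z with hlt | he | hlt
  · exact hlt
  · subst he; omega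
  · exact absurd (rnk_strictMono hz hlt) (by omega)

theorem rnk_surj (C : Finset S) : ∀ i < C.card, ∃ y ∈ C, rnk C y = i := by
  intro i hi
  have himg : C.image (rnk C) = Finset.range C.card := by
    apply Finset.eq_of_subset_of_card_le
    · intro j hj
      obtain ⟨y, hy, hyj⟩ := Finset.mem_image.mp hj
      exact Finset.mem_range.mpr (hyj ▸ rnk_lt hy)
    · rw [Finset.card_range, Finset.card_image_of_injOn (fun y hy z hz => rnk_injOn hy hz)]
  have : i ∈ C.image (rnk C) := himg ▸ Finset.mem_range.mpr hi
  obtain ⟨y, hy, hyi⟩ := Finset.mem_image.mp this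
  exact ⟨y, hy, hyi⟩

theorem rnk_min {C : Finset S} (h : C.Nonempty) : rnk C (C.min' h) = 0 := by
  unfold rnk
  rw [Finset.card_eq_zero]
  apply Finset.filter_eq_empty_iff.mpr
  intro w hw
  exact not_lt.mpr (C.min'_le w hw)

theorem rnk_succ {C : Finset S} {y : S} (hy : y ∈ C)
    (hT : (C.filter (y < ·)).Nonempty) :
    rnk C ((C.filter (y < ·)).min' hT) = rnk C y + 1 := by
  set z := (C.filter (y < ·)).min' hT with hzdef
  have hzmem : z ∈ C.filter (y < ·) := Finset.min'_mem _ _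
  have hzC : z ∈ C := (Finset.mem_filter.mp hzmem).1
  have hyz : y < z := (Finset.mem_filter.mp hzmem).2
  have hfe : C.filter (· < z) = insert y (C.filter (· < y)) := by
    ext w
    simp only [Finset.mem_filter, Finset.mem_insert]
    constructor
    · rintro ⟨hwC, hwz⟩
      rcases lt_trichotomy w y with h1 | h1 | h1
      · exact Or.inr ⟨hwC, h1⟩
      · exact Or.inl h1
      · exfalso
        have : z ≤ w := Finset.min'_le _ _ (Finset.mem_filter.mpr ⟨hwC, h1⟩)
        exact absurd hwz (not_lt.mpr this)
    · rintro (h1 | ⟨h1, h2⟩)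
      · exact ⟨h1 ▸ hy, h1 ▸ hyz⟩
      · exact ⟨h1, lt_trans h2 hyz⟩
  unfold rnk
  rw [hfe, Finset.card_insert_of_notMem (by simp)]

theorem rnk_last {C : Finset S} {y : S} (hy : y ∈ C)
    (hT : ¬ (C.filter (y < ·)).Nonempty) : rnk C y = C.card - 1 := by
  have hfe : C.filter (· < y) = C.erase y := by
    ext w
    simp only [Finset.mem_filter, Finset.mem_erase]
    constructor
    · rintro ⟨h1, h2⟩; exact ⟨ne_of_lt h2, h1⟩
    · rintro ⟨h1, h2⟩
      refine ⟨h2, ?_⟩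
      rcases lt_trichotomy w y with h3 | h3 | h3
      · exact h3
      · exact absurd h3 h1
      · exact absurd ⟨w, Finset.mem_filter.mpr ⟨h2, h3⟩⟩ hT
  unfold rnk
  rw [hfe, Finset.card_erase_of_mem hy]

end Rank

section Defs
variable {S : Type*} [Fintype S] [LinearOrder S]

/-- the path visited by the first `m` iterates of `f` from `v` -/
def pathSet (f : S → S) (v : S) (m : ℕ) : Finset S :=
  (Finset.range m).image (fun i => f^[i] v)

/-- Joyal shuffle: replace the path by the permutation read off in sorted order -/
def shuffle (f : S → S) (v : S) (m : ℕ) : S → S :=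
  fun y => if y ∈ pathSet f v m then f^[rnk (pathSet f v m) y] v else f y

open Classical in
/-- non-root periodic points of `g` -/
noncomputable def perC (R : Finset S) (g : S → S) : Finset S :=
  Finset.univ.filter (fun y => y ∉ R ∧ ∃ t ∈ Finset.Icc 1 (Fintype.card S), g^[t] y = y)

/-- inverse Joyal shuffle: turn the cycles of `g` back into a path towards `r` -/
noncomputable def unshufF (R : Finset S) (g : S → S) (r : S) : S → S :=
  fun y =>
    if hy : ∃ x ∈ perC R g, g x = y then
      let T := (perC R g).filter (hy.choose < ·)
      if hT : T.Nonempty then g (T.min' hT) else r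
    else g y

/-- the marked vertex recovered from `(r, g)` -/
noncomputable def unshufV (R : Finset S) (g : S → S) (r : S) : S :=
  if h : (perC R g).Nonempty then g ((perC R g).min' h) else r

/-- extend a function on non-roots to all of `S`, fixing the roots -/
def extFun (R : Finset S) (g0 : {x // x ∈ Rᶜ} → S) : S → S :=
  fun y => if h : y ∈ Rᶜ then g0 ⟨y, h⟩ else y

end Defs

section Generic
variable {S : Type*} [Fintype S] [LinearOrder S]

theorem iterate_mem_of_mapsTo {g : S → S} {C : Finset S} (hm : ∀ w ∈ C, g w ∈ C)
    {y : S} (hy : y ∈ C) (t : ℕ) : g^[t] y ∈ C := by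
  induction t with
  | zero => exact hy
  | succ n ih => rw [Function.iterate_succ_apply']; exact hm _ ih

theorem injOn_iterate {g : S → S} {C : Finset S} (hm : ∀ w ∈ C, g w ∈ C)
    (hinj : ∀ x ∈ C, ∀ y ∈ C, g x = g y → x = y) (t : ℕ) :
    ∀ x ∈ C, ∀ y ∈ C, g^[t] x = g^[t] y → x = y := by
  induction t with
  | zero => intro x _ y _ h; exact h
  | succ n ih =>
    intro x hx y hy h
    rw [Function.iterate_succ_apply', Function.iterate_succ_apply'] at h
    exact ih x hx y hy
      (hinj _ (iterate_mem_of_mapsTo hm hx n) _ (iterate_mem_of_mapsTo hm hy n) h)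

/-- on a finite set mapped injectively into itself, every point is periodic -/
theorem periodic_of_injOn {g : S → S} {C : Finset S} (hm : ∀ w ∈ C, g w ∈ C)
    (hinj : ∀ x ∈ C, ∀ y ∈ C, g x = g y → x = y) {y : S} (hy : y ∈ C) :
    ∃ t, 0 < t ∧ g^[t] y = y := by
  obtain ⟨a, b, hab, _, hba⟩ := exists_periodic_iter g y
  refine ⟨b - a, Nat.sub_pos_of_lt hab, ?_⟩
  have h1 : g^[a] (g^[b-a] y) = g^[a] y := by
    rw [← Function.iterate_add_apply, add_comm, Function.iterate_add_apply]
    exact hba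
  exact injOn_iterate hm hinj a _ (iterate_mem_of_mapsTo hm hy _) _ hy h1

/-- an injective self-map of a finite set is surjective -/
theorem surjOn_of_injOn {g : S → S} {C : Finset S} (hm : ∀ w ∈ C, g w ∈ C)
    (hinj : ∀ x ∈ C, ∀ y ∈ C, g x = g y → x = y) {y : S} (hy : y ∈ C) :
    ∃ x ∈ C, g x = y := by
  have himg : C.image g = C := by
    apply Finset.eq_of_subset_of_card_le
    · intro w hw
      obtain ⟨x, hx, hxw⟩ := Finset.mem_image.mp hw
      exact hxw ▸ hm x hx
    · rw [Finset.card_image_of_injOn (fun x hx y hy => hinj x hx y hy)]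
  have : y ∈ C.image g := by rw [himg]; exact hy
  exact Finset.mem_image.mp this

end Generic

section PerCLemmas
variable {S : Type*} [Fintype S] [LinearOrder S] {R : Finset S} {g : S → S}

theorem perC_not_root {y : S} (hy : y ∈ perC R g) : y ∉ R := by
  simp only [perC, Finset.mem_filter] at hy
  exact hy.2.1

theorem perC_periodic {y : S} (hy : y ∈ perC R g) : ∃ t, 0 < t ∧ g^[t] y = y := by
  simp only [perC, Finset.mem_filter] at hy
  obtain ⟨t, ht, hyt⟩ := hy.2.2
  exact ⟨t, (Finset.mem_Icc.mp ht).1, hyt⟩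

theorem mem_perC {y : S} {t : ℕ} (hyR : y ∉ R) (ht : 0 < t) (hyt : g^[t] y = y) :
    y ∈ perC R g := by
  obtain ⟨u, hu1, hu2, hu3⟩ := periodic_small ht hyt
  simp only [perC, Finset.mem_filter, Finset.mem_univ, true_and]
  exact ⟨hyR, u, Finset.mem_Icc.mpr ⟨hu1, hu2⟩, hu3⟩

theorem perC_injOn {x y : S} (hx : x ∈ perC R g) (hy : y ∈ perC R g)
    (h : g x = g y) : x = y := by
  obtain ⟨t, ht, hxt⟩ := perC_periodic hx
  obtain ⟨s, hs, hys⟩ := perC_periodic hy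
  exact periodic_inj ht hs hxt hys h

theorem perC_closed (hgR : ∀ w ∈ R, g w = w) {y : S} (hy : y ∈ perC R g) :
    g y ∈ perC R g := by
  obtain ⟨t, ht, hyt⟩ := perC_periodic hy
  have hgyR : g y ∉ R := by
    intro hR
    have hiter : ∀ s, g^[s + 1] y ∈ R := by
      intro s
      induction s with
      | zero => simpa using hR
      | succ p ih =>
        rw [show p + 1 + 1 = (p + 1) + 1 by rfl, Function.iterate_succ_apply', hgR _ ih]
        exact ih
    have : g^[t] y ∈ R := by
      rw [show t = (t - 1) + 1 by omega]
      exact hiter _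
    rw [hyt] at this
    exact perC_not_root hy this
  exact mem_perC hgyR ht (periodic_apply hyt)

theorem unshufF_not_mem (hgR : ∀ w ∈ R, g w = w) {y : S} (hy : y ∉ perC R g) (r : S) :
    unshufF R g r y = g y := by
  apply dif_neg
  rintro ⟨x, hx, hgx⟩
  exact hy (hgx ▸ perC_closed hgR hx)

theorem unshufF_spec {z₀ y : S} (hz₀ : z₀ ∈ perC R g) (hgz : g z₀ = y) (r : S) :
    unshufF R g r y =
      if hT : ((perC R g).filter (z₀ < ·)).Nonempty
      then g (((perC R g).filter (z₀ < ·)).min' hT) else r := by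
  have hy : ∃ x ∈ perC R g, g x = y := ⟨z₀, hz₀, hgz⟩
  have hch : hy.choose = z₀ :=
    perC_injOn hy.choose_spec.1 hz₀ (by rw [hy.choose_spec.2, hgz])
  simp only [unshufF, dif_pos hy, hch]

end PerCLemmas

section Forward
variable {S : Type*} [Fintype S] [LinearOrder S] {R : Finset S} {f : S → S} {v : S} {m : ℕ}

/-- iterates before first absorption are pairwise distinct -/
theorem path_injOn (hm : f^[m] v ∈ R) (hmin : ∀ i < m, f^[i] v ∉ R) :
    ∀ i < m, ∀ j < m, f^[i] v = f^[j] v → i = j := by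
  have key : ∀ i j, i < j → j < m → f^[i] v = f^[j] v → False := by
    intro i j hij hjm heq
    set p := j - i with hp
    have hp0 : 0 < p := by omega
    have hz : f^[p] (f^[i] v) = f^[i] v := by
      rw [← Function.iterate_add_apply, show p + i = j by omega, ← heq]
    have h1 : f^[m] v = f^[(m - i) % p + i] v := by
      conv_lhs => rw [show m = (m - i) + i by omega]
      rw [Function.iterate_add_apply, iter_mod hz, ← Function.iterate_add_apply]
    have h2 : (m - i) % p + i < m := by
      have := Nat.mod_lt (m - i) hp0
      omega
    exact hmin _ h2 (h1 ▸ hm)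
  intro i hi j hj heq
  rcases lt_trichotomy i j with h | h | h
  · exact absurd heq (fun he => key i j h hj he)
  · exact h
  · exact absurd heq.symm (fun he => key j i h hi he)

theorem mem_pathSet {y : S} : y ∈ pathSet f v m ↔ ∃ i < m, f^[i] v = y := by
  simp [pathSet]

theorem pathSet_card (hm : f^[m] v ∈ R) (hmin : ∀ i < m, f^[i] v ∉ R) :
    (pathSet f v m).card = m := by
  rw [pathSet, Finset.card_image_of_injOn, Finset.card_range]
  intro i hi j hj heq
  simp only [Finset.coe_range, Set.mem_Iio] at hi hj
  exact path_injOn hm hmin i hi j hj heq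

theorem pathSet_not_root (hmin : ∀ i < m, f^[i] v ∉ R) {y : S} (hy : y ∈ pathSet f v m) :
    y ∉ R := by
  obtain ⟨i, hi, hiy⟩ := mem_pathSet.mp hy
  exact hiy ▸ hmin i hi

theorem shuffle_mem {y : S} (hy : y ∈ pathSet f v m) :
    shuffle f v m y = f^[rnk (pathSet f v m) y] v := if_pos hy

theorem shuffle_not_mem {y : S} (hy : y ∉ pathSet f v m) : shuffle f v m y = f y :=
  if_neg hy

theorem shuffle_maps (hm : f^[m] v ∈ R) (hmin : ∀ i < m, f^[i] v ∉ R) :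
    ∀ y ∈ pathSet f v m, shuffle f v m y ∈ pathSet f v m := by
  intro y hy
  rw [shuffle_mem hy]
  have hr := rnk_lt hy
  rw [pathSet_card hm hmin] at hr
  exact mem_pathSet.mpr ⟨_, hr, rfl⟩

theorem shuffle_injOn (hm : f^[m] v ∈ R) (hmin : ∀ i < m, f^[i] v ∉ R) :
    ∀ x ∈ pathSet f v m, ∀ y ∈ pathSet f v m,
      shuffle f v m x = shuffle f v m y → x = y := by
  intro x hx y hy h
  rw [shuffle_mem hx, shuffle_mem hy] at h
  have hcard := pathSet_card hm hmin
  have hrx := rnk_lt hx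
  have hry := rnk_lt hy
  rw [hcard] at hrx hry
  exact rnk_injOn hx hy (path_injOn hm hmin _ hrx _ hry h)

theorem shuffle_fix_root (hmin : ∀ i < m, f^[i] v ∉ R) (hfix : ∀ i ∈ R, f i = i) :
    ∀ w ∈ R, shuffle f v m w = w := by
  intro w hw
  rw [shuffle_not_mem (fun hc => pathSet_not_root hmin hc hw)]
  exact hfix w hw

/-- key step: the non-root periodic points of the shuffled map are exactly the path -/
theorem perC_shuffle (hm : f^[m] v ∈ R) (hmin : ∀ i < m, f^[i] v ∉ R)
    (habs : ∀ y : S, ∃ n, f^[n] y ∈ R) (hfix : ∀ i ∈ R, f i = i) :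
    perC R (shuffle f v m) = pathSet f v m := by
  set C := pathSet f v m with hC
  set g := shuffle f v m with hg
  ext y
  constructor
  · intro hy
    have hyR : y ∉ R := perC_not_root hy
    obtain ⟨t, ht, hyt⟩ := perC_periodic hy
    by_contra hyC
    have hCclosed : ∀ s, ∀ w ∈ C, g^[s] w ∈ C :=
      fun s w hw => iterate_mem_of_mapsTo (shuffle_maps hm hmin) hw s
    have hgR : ∀ w ∈ R, g w = w := shuffle_fix_root hmin hfix
    have claim : ∀ s : ℕ, (∃ u ≤ s, g^[u] y ∈ C) ∨ g^[s] y = f^[s] y := by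
      intro s
      induction s with
      | zero => exact Or.inr rfl
      | succ n ih =>
        rcases ih with ⟨u, hu, huC⟩ | heq
        · exact Or.inl ⟨u, Nat.le_succ_of_le hu, huC⟩
        · by_cases hc : g^[n] y ∈ C
          · exact Or.inl ⟨n, Nat.le_succ n, hc⟩
          · right
            rw [Function.iterate_succ_apply', Function.iterate_succ_apply', heq]
            rw [heq] at hc
            exact shuffle_not_mem hc
    obtain ⟨n, hn⟩ := habs y
    rcases claim n with ⟨u, hun, huC⟩ | heq
    · have hT : g^[t * (u + 1)] y = y := by
        rw [Function.iterate_mul]; exact Function.iterate_fixed hyt _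
      have hTu : u ≤ t * (u + 1) := by nlinarith
      have hmem : g^[t * (u + 1)] y ∈ C := by
        rw [show t * (u + 1) = (t * (u + 1) - u) + u by omega, Function.iterate_add_apply]
        exact hCclosed _ _ huC
      rw [hT] at hmem
      exact hyC hmem
    · have hR : ∀ s, g^[n + s] y ∈ R := by
        intro s
        induction s with
        | zero => simpa [heq] using hn
        | succ p ih =>
          rw [show n + (p + 1) = (n + p) + 1 by omega, Function.iterate_succ_apply',
            hgR _ ih]
          exact ih
      have hT : g^[t * (n + 1)] y = y := by
        rw [Function.iterate_mul]; exact Function.iterate_fixed hyt _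
      have hTn : n ≤ t * (n + 1) := by nlinarith
      have hmem : g^[t * (n + 1)] y ∈ R := by
        rw [show t * (n + 1) = n + (t * (n + 1) - n) by omega]
        exact hR _
      rw [hT] at hmem
      exact hyR hmem
  · intro hyC
    obtain ⟨t, ht, hyt⟩ :=
      periodic_of_injOn (shuffle_maps hm hmin) (shuffle_injOn hm hmin) hyC
    exact mem_perC (pathSet_not_root hmin hyC) ht hyt

end Forward

section RoundTrip1
variable {S : Type*} [Fintype S] [LinearOrder S] {R : Finset S} {f : S → S} {v : S} {m : ℕ}

theorem unshufF_shuffle (hm : f^[m] v ∈ R) (hmin : ∀ i < m, f^[i] v ∉ R)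
    (habs : ∀ y : S, ∃ n, f^[n] y ∈ R) (hfix : ∀ i ∈ R, f i = i) :
    unshufF R (shuffle f v m) (f^[m] v) = f := by
  set C := pathSet f v m with hC
  set g := shuffle f v m with hg
  set r := f^[m] v with hr
  have hper : perC R g = C := perC_shuffle hm hmin habs hfix
  have hcard : C.card = m := pathSet_card hm hmin
  funext y
  by_cases hyC : y ∈ C
  · obtain ⟨i, hi, hiy⟩ := mem_pathSet.mp hyC
    obtain ⟨z₀, hz₀C, hz₀r⟩ := rnk_surj C i (by omega)
    have hgz : g z₀ = y := by rw [hg, shuffle_mem hz₀C, ← hC, hz₀r, hiy]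
    have hz₀per : z₀ ∈ perC R g := by rw [hper]; exact hz₀C
    rw [unshufF_spec hz₀per hgz, hper]
    by_cases hT : (C.filter (z₀ < ·)).Nonempty
    · rw [dif_pos hT]
      set z₁ := (C.filter (z₀ < ·)).min' hT with hz₁
      have hz₁C : z₁ ∈ C := (Finset.mem_filter.mp (Finset.min'_mem _ hT)).1
      have hrz₁ : rnk C z₁ = i + 1 := by rw [← hz₀r]; exact rnk_succ hz₀C hT
      have hi1 : i + 1 < m := by
        have := rnk_lt hz₁C
        rw [hcard, hrz₁] at this
        exact this
      rw [hg, shuffle_mem hz₁C, ← hC, hrz₁, Function.iterate_succ_apply', hiy]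
    · rw [dif_neg hT]
      have hlast := rnk_last hz₀C hT
      rw [hz₀r, hcard] at hlast
      have hm0 : 0 < m := by omega
      rw [hr, ← hiy, ← Function.iterate_succ_apply' f i v, hlast,
        show (m - 1).succ = m by omega]
  · have hy' : y ∉ perC R g := by rw [hper]; exact hyC
    rw [unshufF_not_mem (shuffle_fix_root hmin hfix) hy', shuffle_not_mem hyC]

theorem unshufV_shuffle (hm : f^[m] v ∈ R) (hmin : ∀ i < m, f^[i] v ∉ R)
    (habs : ∀ y : S, ∃ n, f^[n] y ∈ R) (hfix : ∀ i ∈ R, f i = i) :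
    unshufV R (shuffle f v m) (f^[m] v) = v := by
  set C := pathSet f v m with hC
  set g := shuffle f v m with hg
  have hper : perC R g = C := perC_shuffle hm hmin habs hfix
  have hcard : C.card = m := pathSet_card hm hmin
  rw [unshufV]
  by_cases hne : C.Nonempty
  · have hne' : (perC R g).Nonempty := by rw [hper]; exact hne
    rw [dif_pos hne']
    have hmm : (perC R g).min' hne' = C.min' hne := by congr 1
    rw [hmm]
    have hminC : C.min' hne ∈ C := Finset.min'_mem _ _
    rw [hg, shuffle_mem hminC, ← hC, rnk_min hne]
    rfl
  · have hne' : ¬ (perC R g).Nonempty := by rw [hper]; exact hne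
    rw [dif_neg hne']
    have hm0 : m = 0 := by
      rw [← hcard, Finset.card_eq_zero, ← Finset.not_nonempty_iff_eq_empty]
      exact hne
    rw [hm0]
    rfl

end RoundTrip1

section Backward
variable {S : Type*} [Fintype S] [LinearOrder S] {R : Finset S} {g : S → S} {r : S}

theorem unshufF_fix (hgR : ∀ w ∈ R, g w = w) :
    ∀ w ∈ R, unshufF R g r w = w := by
  intro w hw
  rw [unshufF_not_mem hgR (fun hc => perC_not_root hc hw) r]
  exact hgR w hw

theorem unshufF_absorb_per (hgR : ∀ w ∈ R, g w = w) (hr : r ∈ R) :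
    ∀ y ∈ perC R g, ∃ t, (unshufF R g r)^[t] y ∈ R := by
  set C := perC R g with hCdef
  set f := unshufF R g r with hfdef
  set M := C.card with hMdef
  have H : ∀ d, ∀ y z₀, z₀ ∈ C → g z₀ = y → M - rnk C z₀ ≤ d → ∃ t, f^[t] y ∈ R := by
    intro d
    induction d with
    | zero =>
      intro y z₀ hz₀ _ hle
      have := rnk_lt hz₀
      omega
    | succ d ih =>
      intro y z₀ hz₀ hgz hle
      have hfy := unshufF_spec (R := R) hz₀ hgz r
      by_cases hT : (C.filter (z₀ < ·)).Nonempty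
      · set z₁ := (C.filter (z₀ < ·)).min' hT with hz₁def
        have hz₁C : z₁ ∈ C := (Finset.mem_filter.mp (Finset.min'_mem _ hT)).1
        have hr₁ : rnk C z₁ = rnk C z₀ + 1 := rnk_succ hz₀ hT
        have hlt := rnk_lt hz₀
        obtain ⟨t, ht⟩ := ih (g z₁) z₁ hz₁C rfl (by omega)
        refine ⟨t + 1, ?_⟩
        rw [Function.iterate_succ_apply]
        have hfyv : f y = g z₁ := by rw [hfdef, hfy, dif_pos hT]
        rw [hfyv]
        exact ht
      · refine ⟨1, ?_⟩
        have : f y = r := by rw [hfdef, hfy, dif_neg hT]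
        simpa [this] using hr
  intro y hy
  obtain ⟨z₀, hz₀, hgz⟩ := surjOn_of_injOn (fun w hw => perC_closed hgR hw)
    (fun x hx y hy => perC_injOn hx hy) hy
  exact H M y z₀ hz₀ hgz (by omega)

theorem unshufF_absorb (hgR : ∀ w ∈ R, g w = w) (hr : r ∈ R) :
    ∀ y, ∃ t, (unshufF R g r)^[t] y ∈ R := by
  classical
  intro y
  set C := perC R g with hCdef
  set f := unshufF R g r with hfdef
  have hex : ∃ s, g^[s] y ∈ C ∨ g^[s] y ∈ R := by
    obtain ⟨a, b, hab, _, hba⟩ := exists_periodic_iter g y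
    by_cases hz : g^[a] y ∈ R
    · exact ⟨a, Or.inr hz⟩
    · exact ⟨a, Or.inl (mem_perC hz (Nat.sub_pos_of_lt hab) hba)⟩
  set s₀ := Nat.find hex with hs₀def
  have hspec := Nat.find_spec hex
  have hclaim : ∀ s ≤ s₀, f^[s] y = g^[s] y := by
    intro s hs
    induction s with
    | zero => rfl
    | succ n ih =>
      have hn : n < s₀ := by omega
      have hnC : ¬(g^[n] y ∈ C ∨ g^[n] y ∈ R) := Nat.find_min hex hn
      push_neg at hnC
      rw [Function.iterate_succ_apply', Function.iterate_succ_apply',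
        ih (by omega), hfdef, unshufF_not_mem hgR hnC.1 r]
  rcases hspec with hC | hR
  · obtain ⟨t, ht⟩ := unshufF_absorb_per hgR hr _ hC
    refine ⟨t + s₀, ?_⟩
    rw [Function.iterate_add_apply, hclaim s₀ le_rfl]
    exact ht
  · exact ⟨s₀, by rw [hclaim s₀ le_rfl]; exact hR⟩

theorem isForest_unshufF (hgR : ∀ w ∈ R, g w = w) (hr : r ∈ R) :
    IsForest R (unshufF R g r) :=
  ⟨unshufF_fix hgR, unshufF_absorb hgR hr⟩

theorem unshuf_roundtrip (hgR : ∀ w ∈ R, g w = w) (hr : r ∈ R) :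
    (unshufF R g r)^[(perC R g).card] (unshufV R g r) = r ∧
    (∀ i < (perC R g).card, (unshufF R g r)^[i] (unshufV R g r) ∉ R) ∧
    (∀ y, shuffle (unshufF R g r) (unshufV R g r) (perC R g).card y = g y) := by
  set C := perC R g with hCdef
  set f := unshufF R g r with hfdef
  set v := unshufV R g r with hvdef
  set M := C.card with hMdef
  haveI : Nonempty S := ⟨r⟩
  choose! c hcC hcr using rnk_surj C
  have hK0 : ∀ y ∈ C, c (rnk C y) = y := by
    intro y hy
    have h1 := rnk_lt hy
    exact rnk_injOn (hcC _ h1) hy (hcr _ h1)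
  have hxC : ∀ i < M, g (c i) ∈ C := fun i hi => perC_closed hgR (hcC i hi)

  have hK1 : ∀ i, i + 1 < M → f (g (c i)) = g (c (i + 1)) := by
    intro i hi
    have hciC : c i ∈ C := hcC i (by omega)
    have hci1C : c (i + 1) ∈ C := hcC (i + 1) hi
    have hlt : c i < c (i + 1) :=
      rnk_lt_of_mem_lt hciC hci1C (by rw [hcr i (by omega), hcr (i + 1) hi]; omega)
    have hT : (C.filter (c i < ·)).Nonempty :=
      ⟨c (i + 1), Finset.mem_filter.mpr ⟨hci1C, hlt⟩⟩
    rw [hfdef, unshufF_spec hciC rfl r, dif_pos hT]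
    congr 1
    have hmemC : (C.filter (c i < ·)).min' hT ∈ C :=
      (Finset.mem_filter.mp (Finset.min'_mem _ hT)).1
    apply rnk_injOn hmemC hci1C
    rw [rnk_succ hciC hT, hcr i (by omega), hcr (i + 1) hi]
  have hK2 : 0 < M → f (g (c (M - 1))) = r := by
    intro hM
    have hciC : c (M - 1) ∈ C := hcC _ (by omega)
    have hT : ¬(C.filter (c (M - 1) < ·)).Nonempty := by
      rintro ⟨w, hw⟩
      obtain ⟨hwC, hwgt⟩ := Finset.mem_filter.mp hw
      have h1 := rnk_strictMono hciC hwgt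
      have h2 := rnk_lt hwC
      rw [hcr _ (by omega)] at h1
      omega
    rw [hfdef, unshufF_spec hciC rfl r, dif_neg hT]
  have hK3 : 0 < M → v = g (c 0) := by
    intro hM
    have hne : C.Nonempty := Finset.card_pos.mp hM
    have : v = g (C.min' hne) := by rw [hvdef, unshufV, dif_pos hne]
    rw [this]
    congr 1
    exact (rnk_injOn (Finset.min'_mem _ _) (hcC 0 hM)
      (by rw [rnk_min hne, hcr 0 hM])).symm ▸ rfl
  have hK3' : M = 0 → v = r := by
    intro hM
    have hne : ¬ C.Nonempty := by
      intro h
      have := Finset.card_pos.mpr h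
      omega
    rw [hvdef, unshufV, dif_neg hne]
  have hK4 : ∀ i < M, f^[i] v = g (c i) := by
    intro i
    induction i with
    | zero => intro h0; simpa using hK3 h0
    | succ n ih =>
      intro hn
      rw [Function.iterate_succ_apply', ih (by omega), hK1 n hn]
  have hK5 : f^[M] v = r := by
    by_cases hM : 0 < M
    · rw [show M = (M - 1) + 1 by omega, Function.iterate_succ_apply',
        hK4 (M - 1) (by omega), hK2 hM]
    · simp only [show M = 0 by omega, Function.iterate_zero, id_eq]
      exact hK3' (by omega)
  have hK6 : ∀ i < M, f^[i] v ∉ R := by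
    intro i hi
    rw [hK4 i hi]
    exact perC_not_root (hxC i hi)
  have hK7 : pathSet f v M = C := by
    ext y
    rw [mem_pathSet]
    constructor
    · rintro ⟨i, hi, hiy⟩
      rw [hK4 i hi] at hiy
      exact hiy ▸ hxC i hi
    · intro hy
      obtain ⟨z₀, hz₀, hgz⟩ := surjOn_of_injOn (fun w hw => perC_closed hgR hw)
        (fun x hx y hy => perC_injOn hx hy) hy
      refine ⟨rnk C z₀, rnk_lt hz₀, ?_⟩
      rw [hK4 _ (rnk_lt hz₀), hK0 z₀ hz₀, hgz]
  refine ⟨hK5, hK6, ?_⟩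
  intro y
  by_cases hy : y ∈ pathSet f v M
  · rw [shuffle_mem hy, hK7] at *
    rw [hK4 _ (rnk_lt hy), hK0 y hy]
  · rw [shuffle_not_mem hy, hK7] at *
    rw [hfdef, unshufF_not_mem hgR hy r]

end Backward

section Main
variable {S : Type*} [Fintype S] [LinearOrder S]

theorem extFun_fix (R : Finset S) (g0 : {x // x ∈ Rᶜ} → S) :
    ∀ w ∈ R, extFun R g0 w = w := by
  intro w hw
  rw [extFun, dif_neg (by simp [hw])]

theorem card_forests (R : Finset S) :
    Nat.card {f : S → S // IsForest R f} * Fintype.card S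
      = R.card * Fintype.card S ^ (Fintype.card S - R.card) := by
  classical
  rw [← Finset.card_compl R]
  have key : Nat.card ({f : S → S // IsForest R f} × S)
      = Nat.card ({x // x ∈ R} × ({x // x ∈ Rᶜ} → S)) := by
    apply Nat.card_eq_of_bijective
      (f := fun p =>
        (⟨p.1.1^[Nat.find (p.1.2.2 p.2)] p.2, Nat.find_spec (p.1.2.2 p.2)⟩,
          fun y => shuffle p.1.1 p.2 (Nat.find (p.1.2.2 p.2)) y.1))
    rw [Function.bijective_iff_has_inverse]
    refine ⟨fun q =>
      (⟨unshufF R (extFun R q.2) q.1.1,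
        isForest_unshufF (extFun_fix R q.2) q.1.2⟩,
        unshufV R (extFun R q.2) q.1.1), ?_, ?_⟩
    · rintro ⟨⟨f, hf⟩, v⟩
      set m := Nat.find (hf.2 v) with hmdef
      have hm : f^[m] v ∈ R := Nat.find_spec (hf.2 v)
      have hmin : ∀ i < m, f^[i] v ∉ R := fun i hi => Nat.find_min (hf.2 v) hi
      have hext : extFun R (fun y : {x // x ∈ Rᶜ} => shuffle f v m y.1)
          = shuffle f v m := by
        funext y
        by_cases hy : y ∈ Rᶜ
        · rw [extFun, dif_pos hy]
        · rw [extFun, dif_neg hy]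
          exact (shuffle_fix_root hmin hf.1 y (by simpa using hy)).symm
      simp only [← hmdef, hext]
      refine Prod.ext (Subtype.ext ?_) ?_
      · exact unshufF_shuffle hm hmin hf.2 hf.1
      · exact unshufV_shuffle hm hmin hf.2 hf.1
    · rintro ⟨⟨r, hr⟩, g0⟩
      set g := extFun R g0 with hgdef
      have hgR : ∀ w ∈ R, g w = w := extFun_fix R g0
      set f := unshufF R g r with hfdef
      set v := unshufV R g r with hvdef
      set M := (perC R g).card with hMdef
      obtain ⟨hA, hB, hCsh⟩ := unshuf_roundtrip (r := r) hgR hr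
      have hforest : IsForest R f := isForest_unshufF hgR hr
      have hfind : Nat.find (hforest.2 v) = M := by
        rw [Nat.find_eq_iff]
        exact ⟨by rw [hA]; exact hr, fun i hi => hB i hi⟩
      refine Prod.ext (Subtype.ext ?_) ?_
      · show f^[Nat.find (hforest.2 v)] v = r
        rw [hfind, hA]
      · show (fun y : {x // x ∈ Rᶜ} => shuffle f v (Nat.find (hforest.2 v)) y.1) = g0
        funext y
        rw [hfind]
        have := hCsh y.1
        rw [this, hgdef, extFun, dif_pos y.2]
  rw [Nat.card_prod, Nat.card_prod, Nat.card_eq_fintype_card (α := S)] at key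
  rw [key, Nat.card_eq_fintype_card, Fintype.card_coe, Nat.card_fun,
    Nat.card_eq_fintype_card (α := S), Nat.card_eq_fintype_card, Fintype.card_coe]

end Main


/-- Cayley's formula: the number of forests labeled by `[n]` with root set `[k]` is
`k · n^{n-k-1}` (stated multiplied through by `n` to stay in `ℕ`). -/
theorem cayley_formula (n k : ℕ) (h1 : 1 ≤ k) (h2 : k ≤ n) :
    cayley n k * n = k * n ^ (n - k) := by
  have hcard : (Finset.univ.filter fun i : Fin n => (i : ℕ) < k).card = k := by
    have hsub : ∀ m ∈ Finset.range k, m < n := fun m hm =>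
      lt_of_lt_of_le (Finset.mem_range.mp hm) h2
    have : (Finset.univ.filter fun i : Fin n => (i : ℕ) < k)
        = (Finset.range k).attachFin hsub := by
      ext i
      simp [Finset.mem_attachFin]
    rw [this, Finset.card_attachFin, Finset.card_range]
  have hc := card_forests (S := Fin n) (Finset.univ.filter fun i : Fin n => (i : ℕ) < k)
  rw [hcard, Fintype.card_fin] at hc
  unfold cayley
  exact hc
end
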